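/- arXiv:1903.02385 — 3 statements merged into one kernel-verified Lean document; each statement's English description precedes it below -/
import Mathlib

section
/- Let v : ℝ → ℝ be a C⁴ positive solution of the ODE v''''(t) − A·v''(t) + B·v(t) = g(v(t)). Then v'(t) < ((n−4)/2)·v(t) for all t ∈ ℝ. Equivalently, the corresponding radial function u(x) = |x|^{−(n−4)/2}·v(ln|x|) satisfies ∂u/∂|x| < 0 on ℝⁿ \ {0}. -/
open Real Filter Set

noncomputable section

namespace Stmt15Aux

/-- derivative of `t ↦ exp (c*t) * f t`. -/
lemma hd_exp_mul {f f' : ℝ → ℝ} (c : ℝ) (hf : ∀ t, HasDerivAt f (f' t) t) (t : ℝ) :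
    HasDerivAt (fun t => exp (c * t) * f t) (exp (c * t) * (f' t + c * f t)) t := by
  have h1 : HasDerivAt (fun t : ℝ => exp (c * t)) (exp (c * t) * c) t := by
    simpa using (((hasDerivAt_id t).const_mul c).exp)
  have := h1.mul (hf t)
  refine (this).congr_deriv ?_
  ring

lemma hd_const_exp (c d : ℝ) (t : ℝ) :
    HasDerivAt (fun t : ℝ => d * exp (c * t)) (d * c * exp (c * t)) t := by
  have h1 : HasDerivAt (fun t : ℝ => exp (c * t)) (exp (c * t) * c) t := by
    simpa using (((hasDerivAt_id t).const_mul c).exp)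
  have := h1.const_mul d
  refine (this).congr_deriv ?_
  ring

/-- monotone comparison on `Iic T` : if derivative is nonneg there. -/
lemma le_on_Iic {f f' : ℝ → ℝ} (hf : ∀ t, HasDerivAt f (f' t) t) {T : ℝ}
    (h : ∀ t ≤ T, 0 ≤ f' t) {s t : ℝ} (hs : s ≤ t) (ht : t ≤ T) : f s ≤ f t := by
  have hmono : MonotoneOn f (Iic T) := by
    apply monotoneOn_of_deriv_nonneg (convex_Iic T)
    · exact (fun x _ => (hf x).differentiableAt.continuousAt.continuousWithinAt)
    · exact fun x hx => (hf x).differentiableAt.differentiableWithinAt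
    · intro x hx
      rw [interior_Iic] at hx
      rw [(hf x).deriv]
      exact h x (le_of_lt hx)
  exact hmono (le_trans hs ht) ht hs

/-- antitone comparison on `Iic T`. -/
lemma ge_on_Iic {f f' : ℝ → ℝ} (hf : ∀ t, HasDerivAt f (f' t) t) {T : ℝ}
    (h : ∀ t ≤ T, f' t ≤ 0) {s t : ℝ} (hs : s ≤ t) (ht : t ≤ T) : f t ≤ f s := by
  have := le_on_Iic (f := fun t => -f t) (f' := fun t => -f' t)
    (fun t => (hf t).neg) (T := T) (fun t htT => by simpa using h t htT) hs ht
  simp only [neg_le_neg_iff] at this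
  exact this

lemma le_on_Ici {f f' : ℝ → ℝ} (hf : ∀ t, HasDerivAt f (f' t) t) {S : ℝ}
    (h : ∀ t, S ≤ t → 0 ≤ f' t) {s t : ℝ} (hS : S ≤ s) (hst : s ≤ t) : f s ≤ f t := by
  have hmono : MonotoneOn f (Ici S) := by
    apply monotoneOn_of_deriv_nonneg (convex_Ici S)
    · exact (fun x _ => (hf x).differentiableAt.continuousAt.continuousWithinAt)
    · exact fun x hx => (hf x).differentiableAt.differentiableWithinAt
    · intro x hx
      rw [interior_Ici] at hx
      rw [(hf x).deriv]
      exact h x (le_of_lt hx)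
  exact hmono hS (le_trans hS hst) hst

lemma strict_lt_of_pos {f f' : ℝ → ℝ} (hf : ∀ t, HasDerivAt f (f' t) t)
    (h : ∀ t, 0 < f' t) {s t : ℝ} (hst : s < t) : f s < f t :=
  strictMono_of_hasDerivAt_pos hf h hst

/-- strict monotonicity on `Ici S` when derivative positive on `Ioi S`. -/
lemma strict_lt_on_Ici {f f' : ℝ → ℝ} (hf : ∀ t, HasDerivAt f (f' t) t) {S : ℝ}
    (h : ∀ t, S < t → 0 < f' t) {s t : ℝ} (hS : S ≤ s) (hst : s < t) : f s < f t := by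
  have hmono : StrictMonoOn f (Ici S) := by
    apply strictMonoOn_of_deriv_pos (convex_Ici S)
    · exact (fun x _ => (hf x).differentiableAt.continuousAt.continuousWithinAt)
    · intro x hx
      rw [interior_Ici] at hx
      rw [(hf x).deriv]
      exact h x hx
  exact hmono hS (le_trans hS hst.le) hst

/-- backward eventual domination: for `μ < λ`, `C e^{λ t} ≤ δ e^{μ t}` for all very negative `t`. -/
lemma exists_Iic_exp_le (C : ℝ) {δ lam mu : ℝ} (T₀ : ℝ) (hδ : 0 < δ) (h : mu < lam) :
    ∃ T ≤ T₀, ∀ t ≤ T, C * exp (lam * t) ≤ δ * exp (mu * t) := by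
  rcases le_or_gt C 0 with hC | hC
  · refine ⟨T₀, le_refl _, fun t _ => ?_⟩
    have h1 : C * exp (lam * t) ≤ 0 := mul_nonpos_of_nonpos_of_nonneg hC (exp_pos _).le
    have h2 : 0 < δ * exp (mu * t) := by positivity
    linarith
  · refine ⟨min T₀ (Real.log (δ / C) / (lam - mu)), min_le_left _ _, fun t ht => ?_⟩
    have ht2 : t ≤ Real.log (δ / C) / (lam - mu) := le_trans ht (min_le_right _ _)
    have hlm : 0 < lam - mu := by linarith
    have h3 : (lam - mu) * t ≤ Real.log (δ / C) := by
      rw [mul_comm]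
      exact (le_div_iff₀ hlm).mp ht2
    have h4 : exp ((lam - mu) * t) ≤ δ / C := by
      calc exp ((lam - mu) * t) ≤ exp (Real.log (δ / C)) := exp_le_exp.mpr h3
        _ = δ / C := Real.exp_log (by positivity)
    have h5 : C * exp ((lam - mu) * t) ≤ δ := by
      rw [← le_div_iff₀' hC]; exact h4
    calc C * exp (lam * t) = (C * exp ((lam - mu) * t)) * exp (mu * t) := by
          rw [mul_assoc, ← Real.exp_add]; ring_nf
      _ ≤ δ * exp (mu * t) := by
          apply mul_le_mul_of_nonneg_right h5 (exp_pos _).le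

/-- forward eventual domination: for `λ < μ`, `C e^{λ t} ≤ δ e^{μ t}` for all large `t`. -/
lemma exists_Ici_exp_le (C : ℝ) {δ lam mu : ℝ} (T₀ : ℝ) (hδ : 0 < δ) (h : lam < mu) :
    ∃ T, T₀ ≤ T ∧ ∀ t, T ≤ t → C * exp (lam * t) ≤ δ * exp (mu * t) := by
  rcases le_or_gt C 0 with hC | hC
  · refine ⟨T₀, le_refl _, fun t _ => ?_⟩
    have h1 : C * exp (lam * t) ≤ 0 := mul_nonpos_of_nonpos_of_nonneg hC (exp_pos _).le
    have h2 : 0 < δ * exp (mu * t) := by positivity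
    linarith
  · refine ⟨max T₀ (Real.log (C / δ) / (mu - lam)), le_max_left _ _, fun t ht => ?_⟩
    have ht2 : Real.log (C / δ) / (mu - lam) ≤ t := le_trans (le_max_right _ _) ht
    have hlm : 0 < mu - lam := by linarith
    have h3 : Real.log (C / δ) ≤ (mu - lam) * t := by
      rw [mul_comm]
      exact (div_le_iff₀ hlm).mp ht2
    have h4 : C / δ ≤ exp ((mu - lam) * t) := by
      calc C / δ = exp (Real.log (C / δ)) := (Real.exp_log (by positivity)).symm
        _ ≤ exp ((mu - lam) * t) := exp_le_exp.mpr h3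
    have h5 : C ≤ δ * exp ((mu - lam) * t) := by
      rw [div_le_iff₀ hδ] at h4; linarith [h4]
    calc C * exp (lam * t) ≤ (δ * exp ((mu - lam) * t)) * exp (lam * t) :=
          mul_le_mul_of_nonneg_right h5 (exp_pos _).le
      _ = δ * exp (mu * t) := by
          rw [mul_assoc, ← Real.exp_add]; ring_nf

lemma ge_on_Ici {f f' : ℝ → ℝ} (hf : ∀ t, HasDerivAt f (f' t) t) {S : ℝ}
    (h : ∀ t, S ≤ t → f' t ≤ 0) {s t : ℝ} (hS : S ≤ s) (hst : s ≤ t) : f t ≤ f s := by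
  have := le_on_Ici (f := fun t => -f t) (f' := fun t => -f' t)
    (fun t => (hf t).neg) (S := S) (fun t htT => by simpa using h t htT) hS hst
  simp only [neg_le_neg_iff] at this
  exact this


/-- Fourth-order blow-up lemma: a function with all derivatives up to order 3
eventually positive, growing to infinity, and satisfying `y'''' ≥ κ y^p` with `p > 1`,
cannot be globally defined. -/
lemma blowup {y0 y1 y2 y3 y4 : ℝ → ℝ} {κ p S : ℝ}
    (h0 : ∀ t, HasDerivAt y0 (y1 t) t) (h1 : ∀ t, HasDerivAt y1 (y2 t) t)
    (h2 : ∀ t, HasDerivAt y2 (y3 t) t) (h3 : ∀ t, HasDerivAt y3 (y4 t) t)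
    (hκ : 0 < κ) (hp : 1 < p)
    (hy0pos : ∀ t, 0 < y0 t)
    (hinf : ∀ R : ℝ, ∃ T, S ≤ T ∧ ∀ t, T ≤ t → R ≤ y0 t)
    (h1pos : ∀ t, S ≤ t → 0 < y1 t) (h2pos : ∀ t, S ≤ t → 0 < y2 t)
    (h3pos : ∀ t, S ≤ t → 0 < y3 t)
    (hode : ∀ t, S ≤ t → κ * y0 t ^ p ≤ y4 t) : False := by
  -- derivative of powers of y0
  have hdrpow : ∀ (e : ℝ) (t : ℝ),
      HasDerivAt (fun t => y0 t ^ e) (e * y0 t ^ (e - 1) * y1 t) t := by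
    intro e t
    have := (h0 t).rpow_const (p := e) (Or.inl (hy0pos t).ne')
    convert this using 1
    ring
  -- absorption helper
  have habs : ∀ (K c' e S₀ : ℝ), 0 < c' → 1 ≤ e →
      ∃ T, S₀ ≤ T ∧ S ≤ T ∧ ∀ t, T ≤ t → K ≤ (c' / 2) * y0 t ^ e := by
    intro K c' e S₀ hc' he
    obtain ⟨T, hT, hTy⟩ := hinf (max 1 (2 * K / c'))
    refine ⟨max S₀ T, le_max_left _ _, le_trans hT (le_max_right _ _), fun t ht => ?_⟩
    have hy := hTy t (le_trans (le_max_right _ _) ht)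
    have hy1 : (1:ℝ) ≤ y0 t := le_trans (le_max_left _ _) hy
    have hy2 : 2 * K / c' ≤ y0 t := le_trans (le_max_right _ _) hy
    have hpow : y0 t ≤ y0 t ^ e := by
      calc y0 t = y0 t ^ (1:ℝ) := (Real.rpow_one _).symm
        _ ≤ y0 t ^ e := Real.rpow_le_rpow_of_exponent_le hy1 he
    have : 2 * K / c' ≤ y0 t ^ e := le_trans hy2 hpow
    rw [div_le_iff₀ hc'] at this
    nlinarith
  -- Step 1 : y3 * y1 ≥ (c1/2) y0^(p+1) eventually
  set c1 : ℝ := κ / (p + 1) with hc1def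
  have hc1 : 0 < c1 := by positivity
  set F1 : ℝ → ℝ := fun t => y3 t * y1 t - y2 t * y2 t / 2 - c1 * y0 t ^ (p + 1) with hF1def
  have hF1d : ∀ t, HasDerivAt F1 (y1 t * (y4 t - κ * y0 t ^ p)) t := by
    intro t
    have ha := (h3 t).mul (h1 t)
    have hb := ((h2 t).mul (h2 t)).div_const 2
    have hc := (hdrpow (p + 1) t).const_mul c1
    have hd := (ha.sub hb).sub hc
    refine (hd).congr_deriv ?_
    have hex : p + 1 - 1 = p := by ring
    rw [hex]
    have hp1 : p + 1 ≠ 0 := by positivity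
    rw [hc1def]
    field_simp
    ring
  have hF1mono : ∀ t, S ≤ t → F1 S ≤ F1 t := by
    intro t ht
    exact le_on_Ici hF1d (fun u hu => by
      have := hode u hu
      have := h1pos u hu
      nlinarith) (le_refl S) ht
  obtain ⟨S1, -, hS1, hS1abs⟩ := habs (-(F1 S)) c1 (p + 1) S hc1 (by linarith)
  have step1 : ∀ t, S1 ≤ t → (c1 / 2) * y0 t ^ (p + 1) ≤ y3 t * y1 t := by
    intro t ht
    have h1' := hF1mono t (le_trans hS1 ht)
    have h2' := hS1abs t ht
    have h3' : 0 ≤ y2 t * y2 t / 2 := by nlinarith [mul_self_nonneg (y2 t)]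
    have h4' : c1 * y0 t ^ (p + 1) = 2 * ((c1 / 2) * y0 t ^ (p + 1)) := by ring
    simp only [hF1def] at h1' h2'
    linarith
  -- Step 2 : y2 * y1^2 ≥ (c2/2) y0^(p+2) eventually
  set c2 : ℝ := (c1 / 2) / (p + 2) with hc2def
  have hc2 : 0 < c2 := by positivity
  set F2 : ℝ → ℝ := fun t => y2 t * (y1 t * y1 t) - c2 * y0 t ^ (p + 2) with hF2def
  have hF2d : ∀ t, HasDerivAt F2
      (y1 t * (y3 t * y1 t - (c1 / 2) * y0 t ^ (p + 1)) + 2 * y2 t ^ 2 * y1 t) t := by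
    intro t
    have ha := (h2 t).mul ((h1 t).mul (h1 t))
    have hc := (hdrpow (p + 2) t).const_mul c2
    have hd := ha.sub hc
    refine (hd).congr_deriv ?_
    have hex : p + 2 - 1 = p + 1 := by ring
    rw [hex]
    have hp2 : p + 2 ≠ 0 := by positivity
    simp only [Pi.mul_apply]
    rw [hc2def]
    field_simp
    ring
  have hF2mono : ∀ t, S1 ≤ t → F2 S1 ≤ F2 t := by
    intro t ht
    exact le_on_Ici hF2d (fun u hu => by
      have ha := step1 u hu
      have hb := h1pos u (le_trans hS1 hu)
      nlinarith) (le_refl S1) ht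
  obtain ⟨S2, hS2', hS2S, hS2abs⟩ := habs (-(F2 S1)) c2 (p + 2) S1 hc2 (by linarith)
  have step2 : ∀ t, S2 ≤ t → (c2 / 2) * y0 t ^ (p + 2) ≤ y2 t * (y1 t * y1 t) := by
    intro t ht
    have h1' := hF2mono t (le_trans hS2' ht)
    have h2' := hS2abs t ht
    have h4' : c2 * y0 t ^ (p + 2) = 2 * ((c2 / 2) * y0 t ^ (p + 2)) := by ring
    simp only [hF2def] at h1' h2'
    linarith
  -- Step 3 : y1^4 ≥ c3 y0^(p+3) eventually
  set c3' : ℝ := (c2 / 2) / (p + 3) with hc3'def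
  have hc3' : 0 < c3' := by positivity
  set F3 : ℝ → ℝ := fun t => y1 t ^ 4 / 4 - c3' * y0 t ^ (p + 3) with hF3def
  have hF3d : ∀ t, HasDerivAt F3
      (y1 t * (y2 t * (y1 t * y1 t) - (c2 / 2) * y0 t ^ (p + 2))) t := by
    intro t
    have ha := ((h1 t).pow 4).div_const 4
    have hc := (hdrpow (p + 3) t).const_mul c3'
    have hd := ha.sub hc
    refine (hd).congr_deriv ?_
    have hex : p + 3 - 1 = p + 2 := by ring
    rw [hex]
    have hp3 : p + 3 ≠ 0 := by positivity
    rw [hc3'def]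
    field_simp
    ring
  have hF3mono : ∀ t, S2 ≤ t → F3 S2 ≤ F3 t := by
    intro t ht
    exact le_on_Ici hF3d (fun u hu => by
      have ha := step2 u hu
      have hb := h1pos u (le_trans hS2S hu)
      nlinarith) (le_refl S2) ht
  obtain ⟨S3, hS3', hS3S, hS3abs⟩ := habs (-(F3 S2)) c3' (p + 3) S2 (by positivity) (by linarith)
  set c3 : ℝ := 2 * c3' with hc3def
  have hc3 : 0 < c3 := by positivity
  have step3 : ∀ t, S3 ≤ t → c3 * y0 t ^ (p + 3) ≤ y1 t ^ 4 := by
    intro t ht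
    have h1' := hF3mono t (le_trans hS3' ht)
    have h2' := hS3abs t ht
    have h4' : c3 * y0 t ^ (p + 3) = 4 * ((c3' / 2) * y0 t ^ (p + 3)) := by rw [hc3def]; ring
    have h5' : c3' * y0 t ^ (p + 3) = 2 * ((c3' / 2) * y0 t ^ (p + 3)) := by ring
    simp only [hF3def] at h1' h2'
    linarith
  -- Step 4 : y1 ≥ c4 * y0^r with r = (p+3)/4
  set r : ℝ := (p + 3) * (4:ℝ)⁻¹ with hrdef
  have hr1 : 1 < r := by rw [hrdef]; nlinarith
  set c4 : ℝ := c3 ^ ((4:ℝ)⁻¹) with hc4def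
  have hc4 : 0 < c4 := Real.rpow_pos_of_pos hc3 _
  have step4 : ∀ t, S3 ≤ t → c4 * y0 t ^ r ≤ y1 t := by
    intro t ht
    have hy1 : 0 < y1 t := h1pos t (le_trans hS3S ht)
    have hy0 : 0 < y0 t := hy0pos t
    have hbase : (0:ℝ) ≤ c3 * y0 t ^ (p + 3) := by positivity
    have hmono := Real.rpow_le_rpow hbase (step3 t ht) (by norm_num : (0:ℝ) ≤ (4:ℝ)⁻¹)
    have hlhs : (c3 * y0 t ^ (p + 3)) ^ ((4:ℝ)⁻¹) = c4 * y0 t ^ r := by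
      rw [Real.mul_rpow hc3.le (by positivity : (0:ℝ) ≤ y0 t ^ (p + 3)),
        ← Real.rpow_mul hy0.le, hc4def, hrdef]
    have hrhs : (y1 t ^ 4) ^ ((4:ℝ)⁻¹) = y1 t := by
      rw [← Real.rpow_natCast (y1 t) 4, ← Real.rpow_mul hy1.le]
      norm_num
    rw [hlhs, hrhs] at hmono
    exact hmono
  -- Step 5 : conclude
  set δ : ℝ := (r - 1) * c4 with hδdef
  have hδ : 0 < δ := by
    have : 0 < r - 1 := by linarith
    positivity
  set ψ : ℝ → ℝ := fun t => y0 t ^ (1 - r) + δ * t with hψdef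
  have hψd : ∀ t, HasDerivAt ψ ((1 - r) * y0 t ^ (-r) * y1 t + δ) t := by
    intro t
    have ha := hdrpow (1 - r) t
    have hb : HasDerivAt (fun t : ℝ => δ * t) δ t := by
      simpa using (hasDerivAt_id t).const_mul δ
    have hd := ha.add hb
    refine (hd).congr_deriv ?_
    have hex : 1 - r - 1 = -r := by ring
    rw [hex]
  have hψmono : ∀ t, S3 ≤ t → ψ t ≤ ψ S3 := by
    intro t ht
    apply ge_on_Ici hψd (S := S3) ?_ (le_refl S3) ht
    intro u hu
    have hy1 : c4 * y0 u ^ r ≤ y1 u := step4 u hu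
    have hy0 : 0 < y0 u := hy0pos u
    have hpowpos : 0 < y0 u ^ (-r) := Real.rpow_pos_of_pos hy0 _
    have hkey : (1 - r) * y0 u ^ (-r) * y1 u ≤ (1 - r) * y0 u ^ (-r) * (c4 * y0 u ^ r) := by
      have hneg : (1 - r) * y0 u ^ (-r) < 0 := by
        have : 1 - r < 0 := by linarith
        exact mul_neg_of_neg_of_pos this hpowpos
      nlinarith
    have hcancel : y0 u ^ (-r) * y0 u ^ r = 1 := by
      rw [← Real.rpow_add hy0]
      simp
    have : (1 - r) * y0 u ^ (-r) * (c4 * y0 u ^ r) = -δ := by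
      rw [hδdef]
      calc (1 - r) * y0 u ^ (-r) * (c4 * y0 u ^ r)
          = (1 - r) * c4 * (y0 u ^ (-r) * y0 u ^ r) := by ring
        _ = (1 - r) * c4 := by rw [hcancel, mul_one]
        _ = -((r - 1) * c4) := by ring
    linarith [hkey, this.ge, this.le]
  -- final contradiction
  set tstar : ℝ := max S3 (ψ S3 / δ + 1) with htsdef
  have h1' := hψmono tstar (le_max_left _ _)
  have h2' : ψ S3 / δ + 1 ≤ tstar := le_max_right _ _
  have h3' : ψ S3 + δ ≤ δ * tstar := by
    have hmul := mul_le_mul_of_nonneg_left h2' hδ.le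
    have hcanc : δ * (ψ S3 / δ) = ψ S3 := by field_simp
    rw [mul_add, mul_one, hcanc] at hmul
    exact hmul
  have h4' : 0 < y0 tstar ^ (1 - r) := Real.rpow_pos_of_pos (hy0pos tstar) _
  have hexp : ψ tstar = y0 tstar ^ (1 - r) + δ * tstar := rfl
  have hnn : 0 ≤ δ * tstar - δ * tstar := by ring_nf; exact le_refl 0
  linarith [h1', h3', h4', hexp.le, hexp.ge]




lemma exp_mul_exp (x y t : ℝ) : exp (x * t) * exp (y * t) = exp ((x + y) * t) := by
  rw [← Real.exp_add]; congr 1; ring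

lemma exp_shift (x y zz t : ℝ) (h : zz = x + y) : exp (zz * t) = exp (x * t) * exp (y * t) := by
  rw [exp_mul_exp, h]

lemma peel_ge {co d nu mu D E : ℝ} {f : ℝ → ℝ} (t : ℝ) (hd : co + d = 0) (hmu : mu = nu + d)
    (h : D + E * exp (nu * t) ≤ exp (co * t) * f t) :
    D * exp (d * t) + E * exp (mu * t) ≤ f t := by
  have hmul := mul_le_mul_of_nonneg_left h (exp_pos (d * t)).le
  have h1 : exp (d * t) * (exp (co * t) * f t) = f t := by
    rw [← mul_assoc, ← Real.exp_add]
    have h2 : d * t + co * t = (co + d) * t := by ring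
    rw [h2, hd, zero_mul, Real.exp_zero, one_mul]
  have h2 : exp (d * t) * (D + E * exp (nu * t)) = D * exp (d * t) + E * exp (mu * t) := by
    have e1 : exp (d * t) * exp (nu * t) = exp (mu * t) := by
      rw [← Real.exp_add, hmu]; congr 1; ring
    calc exp (d * t) * (D + E * exp (nu * t))
        = D * exp (d * t) + E * (exp (d * t) * exp (nu * t)) := by ring
      _ = D * exp (d * t) + E * exp (mu * t) := by rw [e1]
  rw [h2, h1] at hmul
  exact hmul

lemma peel_le {co d nu mu D E : ℝ} {f : ℝ → ℝ} (t : ℝ) (hd : co + d = 0) (hmu : mu = nu + d)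
    (h : exp (co * t) * f t ≤ D + E * exp (nu * t)) :
    f t ≤ D * exp (d * t) + E * exp (mu * t) := by
  have h0 : -D + -E * exp (nu * t) ≤ exp (co * t) * (-(f t)) := by
    have he : exp (co * t) * (-(f t)) = -(exp (co * t) * f t) := by ring
    rw [he]
    linarith
  have h1 := peel_ge (co := co) (d := d) (nu := nu) (mu := mu) (D := -D) (E := -E)
    (f := fun s => -(f s)) t hd hmu h0
  have h2 : -D * exp (d * t) + -E * exp (mu * t) ≤ -(f t) := h1
  linarith

/-- The abstract first-order cascade encoding the fourth-order ODE. -/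
structure Quad (a b c p : ℝ) (v w q z G : ℝ → ℝ) : Prop where
  ha : 0 < a
  hab : a < b
  hc : 0 < c
  hp : 1 < p
  hv : ∀ t, HasDerivAt v (a * v t + w t) t
  hw : ∀ t, HasDerivAt w (b * w t + q t) t
  hq : ∀ t, HasDerivAt q (z t - b * q t) t
  hz : ∀ t, HasDerivAt z (G t - a * z t) t
  hvpos : ∀ t, 0 < v t
  hGpos : ∀ t, 0 < G t
  hgrow : ∀ t, 1 ≤ v t → c * v t ^ p ≤ G t

namespace Quad

variable {a b c p : ℝ} {v w q z G : ℝ → ℝ}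

lemma hb (h : Quad a b c p v w q z G) : 0 < b := lt_trans h.ha h.hab

/-- time reversal of the cascade -/
lemma rev (h : Quad a b c p v w q z G) :
    Quad a b c p (fun s => v (-s)) (fun s => -(2 * a * v (-s) + w (-s)))
      (fun s => 2 * a * (a + b) * v (-s) + 2 * (a + b) * w (-s) + q (-s))
      (fun s => 2 * a * (b ^ 2 - a ^ 2) * v (-s) - 2 * a * (a + b) * w (-s)
        - 2 * a * q (-s) - z (-s))
      (fun s => G (-s)) := by
  have hdneg : ∀ {f f' : ℝ → ℝ}, (∀ t, HasDerivAt f (f' t) t) →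
      ∀ s : ℝ, HasDerivAt (fun s : ℝ => f (-s)) (-(f' (-s))) s := by
    intro f f' hf s
    have h1 := (hf (-s)).comp s (hasDerivAt_neg' s)
    refine (h1).congr_deriv ?_
    ring
  refine ⟨h.ha, h.hab, h.hc, h.hp, ?_, ?_, ?_, ?_,
    fun s => h.hvpos (-s), fun s => h.hGpos (-s), fun s => h.hgrow (-s)⟩
  · intro s
    have := hdneg h.hv s
    refine (this).congr_deriv ?_
    ring
  · intro s
    have := (((hdneg h.hv s).const_mul (2 * a)).add (hdneg h.hw s)).neg
    refine (this).congr_deriv ?_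
    ring
  · intro s
    have := (((hdneg h.hv s).const_mul (2 * a * (a + b))).add
      ((hdneg h.hw s).const_mul (2 * (a + b)))).add (hdneg h.hq s)
    refine (this).congr_deriv ?_
    ring
  · intro s
    have := ((((hdneg h.hv s).const_mul (2 * a * (b ^ 2 - a ^ 2))).sub
      ((hdneg h.hw s).const_mul (2 * a * (a + b)))).sub
      ((hdneg h.hq s).const_mul (2 * a))).sub (hdneg h.hz s)
    refine (this).congr_deriv ?_
    ring

/-- Forward blow-up: the configuration `w, q, z ≥ 0` at one point is impossible. -/
lemma fwd (h : Quad a b c p v w q z G) (t₃ : ℝ)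
    (hw0 : 0 ≤ w t₃) (hq0 : 0 ≤ q t₃) (hz0 : 0 ≤ z t₃) : False := by
  have ha := h.ha
  have hb := h.hb
  have hc := h.hc
  have hp := h.hp
  have hFz : ∀ t, HasDerivAt (fun t => exp (a * t) * z t) (exp (a * t) * G t) t := by
    intro t
    have := hd_exp_mul a h.hz t
    convert this using 1
    ring
  have hzpos : ∀ t, t₃ < t → 0 < z t := by
    intro t ht
    have hlt := strict_lt_of_pos hFz (fun u => mul_pos (exp_pos _) (h.hGpos u)) ht
    have h0 : 0 ≤ exp (a * t₃) * z t₃ := mul_nonneg (exp_pos _).le hz0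
    nlinarith [exp_pos (a * t)]
  have hFq : ∀ t, HasDerivAt (fun t => exp (b * t) * q t) (exp (b * t) * z t) t := by
    intro t
    have := hd_exp_mul b h.hq t
    convert this using 1
    ring
  have hqpos : ∀ t, t₃ < t → 0 < q t := by
    intro t ht
    have hlt := strict_lt_on_Ici hFq (S := t₃)
      (fun u hu => mul_pos (exp_pos _) (hzpos u hu)) (le_refl t₃) ht
    have h0 : 0 ≤ exp (b * t₃) * q t₃ := mul_nonneg (exp_pos _).le hq0
    nlinarith [exp_pos (b * t)]
  have hFw : ∀ t, HasDerivAt (fun t => exp (-b * t) * w t) (exp (-b * t) * q t) t := by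
    intro t
    have := hd_exp_mul (-b) h.hw t
    convert this using 1
    ring
  have hwpos : ∀ t, t₃ < t → 0 < w t := by
    intro t ht
    have hlt := strict_lt_on_Ici hFw (S := t₃)
      (fun u hu => mul_pos (exp_pos _) (hqpos u hu)) (le_refl t₃) ht
    have h0 : 0 ≤ exp (-b * t₃) * w t₃ := mul_nonneg (exp_pos _).le hw0
    nlinarith [exp_pos (-b * t)]
  set s₀ : ℝ := t₃ + 1 with hs₀def
  have hs₀ : t₃ < s₀ := by rw [hs₀def]; linarith
  set c₀ : ℝ := exp (-b * s₀) * w s₀ with hc₀def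
  have hc₀ : 0 < c₀ := mul_pos (exp_pos _) (hwpos s₀ hs₀)
  have hwge : ∀ t, s₀ ≤ t → c₀ * exp (b * t) ≤ w t := by
    intro t ht
    have hmono := le_on_Ici hFw (S := s₀)
      (fun u hu => (mul_pos (exp_pos _) (hqpos u (lt_of_lt_of_le hs₀ hu))).le) (le_refl s₀) ht
    have hcomb : c₀ + 0 * exp (0 * t) ≤ exp (-b * t) * w t := by
      rw [hc₀def]
      simpa [neg_mul] using hmono
    have := peel_ge (co := -b) (d := b) (nu := 0) (mu := b) (D := c₀) (E := 0) t
      (by ring) (by ring) hcomb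
    simpa using this
  have hPd : ∀ t, HasDerivAt (fun t => v t - c₀ / b * exp (b * t))
      ((a * v t + w t) - c₀ / b * b * exp (b * t)) t := by
    intro t
    exact (h.hv t).sub (by simpa [mul_assoc] using hd_const_exp b (c₀ / b) t)
  have hvge : ∀ t, s₀ ≤ t → (v s₀ - c₀ / b * exp (b * s₀)) + c₀ / b * exp (b * t) ≤ v t := by
    intro t ht
    have hmono := le_on_Ici hPd (S := s₀) (fun u hu => by
      have h1 := hwge u hu
      have h2 := h.hvpos u
      have h3 : c₀ / b * b * exp (b * u) = c₀ * exp (b * u) := by field_simp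
      nlinarith) (le_refl s₀) ht
    linarith
  have hinf : ∀ R : ℝ, ∃ T, s₀ ≤ T ∧ ∀ t, T ≤ t → R ≤ v t := by
    intro R
    obtain ⟨T, hT, hTp⟩ := exists_Ici_exp_le (R - (v s₀ - c₀ / b * exp (b * s₀))) (T₀ := s₀)
      (δ := c₀ / b) (lam := 0) (mu := b) (by positivity) hb
    refine ⟨T, hT, fun t ht => ?_⟩
    have h1 := hTp t ht
    have h2 := hvge t (le_trans hT ht)
    simp only [zero_mul, Real.exp_zero, mul_one] at h1
    linarith
  set Q : ℝ := 2 * a ^ 2 * b ^ 2 / c + 1 with hQdef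
  have hQ : 0 < Q := by positivity
  set Rstar : ℝ := max 1 (Q ^ (1 / (p - 1))) with hRdef
  obtain ⟨S, hSs₀, hSv⟩ := hinf Rstar
  have hSv1 : ∀ t, S ≤ t → 1 ≤ v t := fun t ht => le_trans (le_max_left _ _) (hSv t ht)
  have ht₃S : t₃ < S := lt_of_lt_of_le hs₀ hSs₀
  apply blowup (S := S)
    (y0 := v) (y1 := fun t => a * v t + w t)
    (y2 := fun t => a * (a * v t + w t) + (b * w t + q t))
    (y3 := fun t => a * (a * (a * v t + w t) + (b * w t + q t)) + (b ^ 2 * w t + z t))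
    (y4 := fun t => (a ^ 2 + b ^ 2) * (a * (a * v t + w t) + (b * w t + q t))
      - a ^ 2 * b ^ 2 * v t + G t)
    (κ := c / 2) (p := p)
  · exact h.hv
  · intro t
    exact ((h.hv t).const_mul a).add (h.hw t)
  · intro t
    have := ((((h.hv t).const_mul a).add (h.hw t)).const_mul a).add
      (((h.hw t).const_mul b).add (h.hq t))
    refine (this).congr_deriv ?_
    ring
  · intro t
    have := ((((((h.hv t).const_mul a).add (h.hw t)).const_mul a).add
      (((h.hw t).const_mul b).add (h.hq t))).const_mul a).add
      (((h.hw t).const_mul (b ^ 2)).add (h.hz t))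
    refine (this).congr_deriv ?_
    ring
  · positivity
  · exact hp
  · exact h.hvpos
  · intro R
    obtain ⟨T, hT, hTp⟩ := hinf R
    exact ⟨max S T, le_max_left _ _, fun t ht => hTp t (le_trans (le_max_right _ _) ht)⟩
  · intro t ht
    have h1 := h.hvpos t
    have h2 := hwpos t (lt_of_lt_of_le ht₃S ht)
    positivity
  · intro t ht
    have h1 := h.hvpos t
    have h2 := hwpos t (lt_of_lt_of_le ht₃S ht)
    have h3 := hqpos t (lt_of_lt_of_le ht₃S ht)
    positivity
  · intro t ht
    have h1 := h.hvpos t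
    have h2 := hwpos t (lt_of_lt_of_le ht₃S ht)
    have h3 := hqpos t (lt_of_lt_of_le ht₃S ht)
    have h4 := hzpos t (lt_of_lt_of_le ht₃S ht)
    positivity
  · intro t ht
    have hv1 : 1 ≤ v t := hSv1 t ht
    have hvp : 0 < v t := h.hvpos t
    have hgr := h.hgrow t hv1
    have hvR : Rstar ≤ v t := hSv t ht
    have hQle : Q ≤ v t ^ (p - 1) := by
      have h1 : Q ^ (1 / (p - 1)) ≤ v t := le_trans (le_max_right _ _) hvR
      have h2 : (Q ^ (1 / (p - 1))) ^ (p - 1) ≤ v t ^ (p - 1) :=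
        Real.rpow_le_rpow (by positivity) h1 (by linarith)
      have h3 : (Q ^ (1 / (p - 1))) ^ (p - 1) = Q := by
        rw [← Real.rpow_mul hQ.le]
        rw [one_div, inv_mul_cancel₀ (by linarith : p - 1 ≠ 0), Real.rpow_one]
      rwa [h3] at h2
    have hsplit : v t ^ p = v t ^ (p - 1) * v t := by
      have he : v t ^ (p - 1) * v t ^ (1:ℝ) = v t ^ p := by
        rw [← Real.rpow_add hvp]
        norm_num
      rw [← he, Real.rpow_one]
    have hkey : a ^ 2 * b ^ 2 * v t ≤ (c / 2) * v t ^ p := by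
      rw [hsplit]
      have h5 : 2 * a ^ 2 * b ^ 2 / c ≤ v t ^ (p - 1) := by
        rw [hQdef] at hQle
        linarith
      have h6 : 2 * a ^ 2 * b ^ 2 ≤ c * v t ^ (p - 1) := by
        rw [div_le_iff₀ hc] at h5
        linarith
      nlinarith [Real.rpow_pos_of_pos hvp (p - 1)]
    have hy2 : 0 ≤ (a ^ 2 + b ^ 2) * (a * (a * v t + w t) + (b * w t + q t)) := by
      have h2 := hwpos t (lt_of_lt_of_le ht₃S ht)
      have h3 := hqpos t (lt_of_lt_of_le ht₃S ht)
      positivity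
    have hfin : c * v t ^ p = (c / 2) * v t ^ p + (c / 2) * v t ^ p := by ring
    linarith [hgr, hkey, hy2]

end Quad


/-- generic forward step: if `(e^{co t} f)' ≥ C e^{lo t}` with `lo > 0` on `[T₁,∞)`,
then `f ≥ (C/(2 lo)) e^{(lo-co)t}` eventually. -/
lemma stepF {f f' : ℝ → ℝ} (co lo C T₁ : ℝ) (hf : ∀ t, HasDerivAt f (f' t) t)
    (hC : 0 < C) (hlo : 0 < lo)
    (hbd : ∀ t, T₁ ≤ t → C * exp (lo * t) ≤ exp (co * t) * (f' t + co * f t)) :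
    ∃ T₂, T₁ ≤ T₂ ∧ ∀ t, T₂ ≤ t → C / (2 * lo) * exp ((lo - co) * t) ≤ f t := by
  have hHd : ∀ t, HasDerivAt (fun t => exp (co * t) * f t - C / lo * exp (lo * t))
      (exp (co * t) * (f' t + co * f t) - C / lo * lo * exp (lo * t)) t :=
    fun t => (hd_exp_mul co hf t).sub (hd_const_exp lo (C / lo) t)
  have hmono : ∀ t, T₁ ≤ t →
      exp (co * T₁) * f T₁ - C / lo * exp (lo * T₁)
        ≤ exp (co * t) * f t - C / lo * exp (lo * t) := by
    intro t ht
    refine le_on_Ici hHd (S := T₁) (fun u hu => ?_) (le_refl T₁) ht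
    have h1 := hbd u hu
    have h2 : C / lo * lo * exp (lo * u) = C * exp (lo * u) := by field_simp
    simp only [sub_nonneg]
    rw [h2]
    exact le_trans h1 (le_refl _)
  set D : ℝ := exp (co * T₁) * f T₁ - C / lo * exp (lo * T₁) with hDdef
  have hpe : ∀ t, T₁ ≤ t → D * exp (-co * t) + C / lo * exp ((lo - co) * t) ≤ f t := by
    intro t ht
    exact peel_ge t (by ring) (by ring) (by linarith [hmono t ht])
  obtain ⟨T₂, hT₂, hT₂p⟩ := exists_Ici_exp_le (-D) (T₀ := T₁) (δ := C / (2 * lo))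
    (lam := -co) (mu := lo - co) (by positivity) (by linarith)
  refine ⟨T₂, hT₂, fun t ht => ?_⟩
  have h1 := hpe t (le_trans hT₂ ht)
  have h2 := hT₂p t ht
  have h3 : C / lo * exp ((lo - co) * t)
      = C / (2 * lo) * exp ((lo - co) * t) + C / (2 * lo) * exp ((lo - co) * t) := by
    field_simp
    ring
  linarith

/-- generic backward step: if `(e^{co t} f)' ≤ -C e^{lo t}` with `lo < 0` on `(-∞,T₁]`,
then `f ≥ (C/(-2 lo)) e^{(lo-co)t}` near `-∞`. -/
lemma stepB_neg {f f' : ℝ → ℝ} (co lo C T₁ : ℝ) (hf : ∀ t, HasDerivAt f (f' t) t)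
    (hC : 0 < C) (hlo : lo < 0)
    (hbd : ∀ t, t ≤ T₁ → exp (co * t) * (f' t + co * f t) ≤ -(C * exp (lo * t))) :
    ∃ T₂, T₂ ≤ T₁ ∧ ∀ t, t ≤ T₂ → C / (-lo) / 2 * exp ((lo - co) * t) ≤ f t := by
  have hHd : ∀ t, HasDerivAt (fun t => exp (co * t) * f t + C / lo * exp (lo * t))
      (exp (co * t) * (f' t + co * f t) + C / lo * lo * exp (lo * t)) t :=
    fun t => (hd_exp_mul co hf t).add (hd_const_exp lo (C / lo) t)
  have hmono : ∀ t, t ≤ T₁ →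
      exp (co * T₁) * f T₁ + C / lo * exp (lo * T₁)
        ≤ exp (co * t) * f t + C / lo * exp (lo * t) := by
    intro t ht
    refine ge_on_Iic hHd (T := T₁) (fun u hu => ?_) ht (le_refl T₁)
    have h1 := hbd u hu
    have h2 : C / lo * lo = C := div_mul_cancel₀ C (ne_of_lt hlo)
    rw [h2]
    linarith
  set D : ℝ := exp (co * T₁) * f T₁ + C / lo * exp (lo * T₁) with hDdef
  have hpe : ∀ t, t ≤ T₁ → D * exp (-co * t) + C / (-lo) * exp ((lo - co) * t) ≤ f t := by
    intro t ht
    have h1 := hmono t ht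
    have h2 : D + C / (-lo) * exp (lo * t) ≤ exp (co * t) * f t := by
      have h3 : C / (-lo) * exp (lo * t) = -(C / lo * exp (lo * t)) := by
        rw [div_neg]
        ring
      rw [h3]
      linarith
    exact peel_ge t (by ring) (by ring) h2
  obtain ⟨T₂, hT₂, hT₂p⟩ := exists_Iic_exp_le (-D) (T₀ := T₁) (δ := C / (-lo) / 2)
    (lam := -co) (mu := lo - co) (by
      have hml : 0 < -lo := by linarith
      positivity) (by linarith)
  refine ⟨T₂, hT₂, fun t ht => ?_⟩
  have h1 := hpe t (le_trans ht hT₂)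
  have h2 := hT₂p t ht
  have h3 : C / (-lo) * exp ((lo - co) * t)
      = C / (-lo) / 2 * exp ((lo - co) * t) + C / (-lo) / 2 * exp ((lo - co) * t) := by
    field_simp
    ring
  linarith

/-- variant : if `(e^{co t} f)' ≥ C e^{lo t}` with `lo < 0` backward,
then `f ≤ -(C/(-lo)/2) e^{(lo-co)t}` near `-∞`. -/
lemma stepB_pos {f f' : ℝ → ℝ} (co lo C T₁ : ℝ) (hf : ∀ t, HasDerivAt f (f' t) t)
    (hC : 0 < C) (hlo : lo < 0)
    (hbd : ∀ t, t ≤ T₁ → C * exp (lo * t) ≤ exp (co * t) * (f' t + co * f t)) :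
    ∃ T₂, T₂ ≤ T₁ ∧ ∀ t, t ≤ T₂ → f t ≤ -(C / (-lo) / 2 * exp ((lo - co) * t)) := by
  obtain ⟨T₂, hT₂, hT₂p⟩ := stepB_neg (f := fun t => -f t) (f' := fun t => -f' t) co lo C T₁
    (fun t => (hf t).neg) hC hlo (fun t ht => by
      have h1 := hbd t ht
      have h2 : exp (co * t) * (-f' t + co * -f t) = -(exp (co * t) * (f' t + co * f t)) := by
        ring
      rw [h2]
      linarith)
  refine ⟨T₂, hT₂, fun t ht => ?_⟩
  have h1 := hT₂p t ht
  have h2 : C / (-lo) / 2 * exp ((lo - co) * t) ≤ -f t := h1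
  linarith

namespace Quad

variable {a b c p : ℝ} {v w q z G : ℝ → ℝ}

/-- exponential growth of `v` at `+∞` is impossible. -/
lemma inf (h : Quad a b c p v w q z G) (ε T : ℝ) (hε : 0 < ε)
    (hlow : ∀ t, T ≤ t → ε * exp (b * t) ≤ v t) : False := by
  have ha := h.ha
  have hb := h.hb
  have hc := h.hc
  have hp := h.hp
  obtain ⟨T₀, hT₀, hT₀p⟩ := exists_Ici_exp_le 1 (T₀ := T) (δ := ε) (lam := 0) (mu := b) hε hb
  have hv1 : ∀ t, T₀ ≤ t → 1 ≤ v t := by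
    intro t ht
    have h1 := hT₀p t ht
    simp only [zero_mul, Real.exp_zero, mul_one] at h1
    exact le_trans h1 (hlow t (le_trans hT₀ ht))
  set c₁ : ℝ := c * ε ^ p with hc₁def
  have hc₁ : 0 < c₁ := mul_pos hc (Real.rpow_pos_of_pos hε _)
  have hGlow : ∀ t, T₀ ≤ t → c₁ * exp (b * p * t) ≤ G t := by
    intro t ht
    have h1 : ε * exp (b * t) ≤ v t := hlow t (le_trans hT₀ ht)
    have h2 : (ε * exp (b * t)) ^ p ≤ v t ^ p :=
      Real.rpow_le_rpow (by positivity) h1 (by linarith)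
    have h3 : (ε * exp (b * t)) ^ p = ε ^ p * exp (b * p * t) := by
      rw [Real.mul_rpow hε.le (exp_pos _).le, ← Real.exp_mul]
      congr 1
      ring
    have h4 := h.hgrow t (hv1 t ht)
    rw [h3] at h2
    calc c₁ * exp (b * p * t) = c * (ε ^ p * exp (b * p * t)) := by rw [hc₁def]; ring
      _ ≤ c * v t ^ p := mul_le_mul_of_nonneg_left h2 hc.le
      _ ≤ G t := h4
  -- z step
  obtain ⟨T₁, hT₁, hzlow0⟩ := stepF (f := z) (f' := fun t => G t - a * z t)
    a (a + b * p) c₁ T₀ h.hz hc₁ (by positivity) (by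
      intro t ht
      have h1 := hGlow t ht
      have h2 : G t - a * z t + a * z t = G t := by ring
      rw [h2]
      have h3 := mul_le_mul_of_nonneg_left h1 (exp_pos (a * t)).le
      calc c₁ * exp ((a + b * p) * t) = exp (a * t) * (c₁ * exp (b * p * t)) := by
            rw [← exp_mul_exp a (b * p) t]; ring
        _ ≤ exp (a * t) * G t := h3)
  have hzlow : ∀ t, T₁ ≤ t → c₁ / (2 * (a + b * p)) * exp (b * p * t) ≤ z t := by
    intro t ht
    have h1 := hzlow0 t ht
    have h2 : a + b * p - a = b * p := by ring
    rwa [h2] at h1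
  set c₂ : ℝ := c₁ / (2 * (a + b * p)) with hc₂def
  have hc₂ : 0 < c₂ := by positivity
  -- q step
  obtain ⟨T₂, hT₂, hqlow0⟩ := stepF (f := q) (f' := fun t => z t - b * q t)
    b (b + b * p) c₂ T₁ h.hq hc₂ (by positivity) (by
      intro t ht
      have h1 := hzlow t ht
      have h2 : z t - b * q t + b * q t = z t := by ring
      rw [h2]
      have h3 := mul_le_mul_of_nonneg_left h1 (exp_pos (b * t)).le
      calc c₂ * exp ((b + b * p) * t) = exp (b * t) * (c₂ * exp (b * p * t)) := by
            rw [← exp_mul_exp b (b * p) t]; ring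
        _ ≤ exp (b * t) * z t := h3)
  have hqlow : ∀ t, T₂ ≤ t → c₂ / (2 * (b + b * p)) * exp (b * p * t) ≤ q t := by
    intro t ht
    have h1 := hqlow0 t ht
    have h2 : b + b * p - b = b * p := by ring
    rwa [h2] at h1
  set c₃ : ℝ := c₂ / (2 * (b + b * p)) with hc₃def
  have hc₃ : 0 < c₃ := by positivity
  -- w step
  have hbp1 : 0 < b * p - b := by nlinarith
  obtain ⟨T₃, hT₃, hwlow0⟩ := stepF (f := w) (f' := fun t => b * w t + q t)
    (-b) (b * p - b) c₃ T₂ h.hw hc₃ hbp1 (by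
      intro t ht
      have h1 := hqlow t ht
      have h2 : b * w t + q t + -b * w t = q t := by ring
      rw [h2]
      have h3 := mul_le_mul_of_nonneg_left h1 (exp_pos (-b * t)).le
      calc c₃ * exp ((b * p - b) * t) = exp (-b * t) * (c₃ * exp (b * p * t)) := by
            rw [exp_shift (-b) (b * p) (b * p - b) t (by ring)]
            ring
        _ ≤ exp (-b * t) * q t := h3)
  -- conclude : w, q, z all positive at T₃'
  set T₄ : ℝ := max T₃ (max T₂ T₁) with hT₄def
  have hT₄₃ : T₃ ≤ T₄ := le_max_left _ _
  have hT₄₂ : T₂ ≤ T₄ := le_trans (le_max_left _ _) (le_max_right _ _)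
  have hT₄₁ : T₁ ≤ T₄ := le_trans (le_max_right _ _) (le_max_right _ _)
  have hwp : 0 < w T₄ := by
    have h1 := hwlow0 T₄ hT₄₃
    have h2 : 0 < c₃ / (2 * (b * p - b)) * exp ((b * p - b - -b) * T₄) := by positivity
    linarith
  have hqp : 0 < q T₄ := by
    have h1 := hqlow T₄ hT₄₂
    have h2 : 0 < c₃ * exp (b * p * T₄) := by positivity
    linarith
  have hzp : 0 < z T₄ := by
    have h1 := hzlow T₄ hT₄₁
    have h2 : 0 < c₂ * exp (b * p * T₄) := by positivity
    linarith
  exact h.fwd T₄ hwp.le hqp.le hzp.le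

/-- a positive lower bound `w ≥ ε e^{-ρ t}` near `-∞` contradicts positivity of `v`. -/
lemma no_pos_w_back (h : Quad a b c p v w q z G) (ρ ε T : ℝ) (hρ : 0 < ρ) (hε : 0 < ε)
    (hlow : ∀ t, t ≤ T → ε * exp (-ρ * t) ≤ w t) : False := by
  have ha := h.ha
  have hPd : ∀ t, HasDerivAt (fun t => v t + ε / ρ * exp (-ρ * t))
      ((a * v t + w t) + ε / ρ * -ρ * exp (-ρ * t)) t :=
    fun t => (h.hv t).add (hd_const_exp (-ρ) (ε / ρ) t)
  have hmono : ∀ t, t ≤ T →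
      v t + ε / ρ * exp (-ρ * t) ≤ v T + ε / ρ * exp (-ρ * T) := by
    intro t ht
    refine le_on_Iic hPd (T := T) (fun u hu => ?_) ht (le_refl T)
    have h1 := hlow u hu
    have h2 := h.hvpos u
    have h3 : ε / ρ * -ρ * exp (-ρ * u) = -(ε * exp (-ρ * u)) := by
      field_simp
    rw [h3]
    nlinarith
  obtain ⟨T₂, hT₂, hT₂p⟩ := exists_Iic_exp_le (v T + ε / ρ * exp (-ρ * T)) (T₀ := T)
    (δ := ε / (2 * ρ)) (lam := 0) (mu := -ρ) (by positivity) (by linarith)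
  have h1 := hmono T₂ hT₂
  have h2 := hT₂p T₂ (le_refl T₂)
  simp only [zero_mul, Real.exp_zero, mul_one] at h2
  have h3 := h.hvpos T₂
  have h4 : ε / ρ * exp (-ρ * T₂) = 2 * (ε / (2 * ρ) * exp (-ρ * T₂)) := by
    field_simp
  have h5 : 0 < ε / (2 * ρ) * exp (-ρ * T₂) := by positivity
  linarith

lemma zpos (h : Quad a b c p v w q z G) : ∀ t, 0 < z t := by
  by_contra hcon
  push_neg at hcon
  obtain ⟨tb, htb⟩ := hcon
  have ha := h.ha
  have hb := h.hb
  have hab := h.hab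
  have hba : 0 < b - a := by linarith
  have hFz : ∀ t, HasDerivAt (fun t => exp (a * t) * z t) (exp (a * t) * G t) t := by
    intro t
    have := hd_exp_mul a h.hz t
    convert this using 1
    ring
  have hFzm : StrictMono (fun t => exp (a * t) * z t) :=
    strictMono_of_hasDerivAt_pos hFz (fun u => mul_pos (exp_pos _) (h.hGpos u))
  set s1 : ℝ := tb - 1 with hs1def
  have hzs1 : exp (a * s1) * z s1 < 0 := by
    have h1 : exp (a * s1) * z s1 < exp (a * tb) * z tb := hFzm (by rw [hs1def]; linarith)
    have h2 : exp (a * tb) * z tb ≤ 0 := mul_nonpos_of_nonneg_of_nonpos (exp_pos _).le htb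
    linarith
  set εz : ℝ := -(exp (a * s1) * z s1) with hεzdef
  have hεz : 0 < εz := by simp only [hεzdef]; linarith
  have hzb : ∀ t, t ≤ s1 → exp (a * t) * z t ≤ -εz := by
    intro t ht
    have h1 := hFzm.monotone ht
    simp only [hεzdef]
    linarith [h1]
  set ε1 : ℝ := εz / (b - a) with hε1def
  have hε1 : 0 < ε1 := by positivity
  -- H_q antitone on Iic s1
  have hHqd : ∀ t, HasDerivAt (fun t => exp (b * t) * q t + ε1 * exp ((b - a) * t))
      (exp (b * t) * z t + ε1 * (b - a) * exp ((b - a) * t)) t := by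
    intro t
    have h1 := hd_exp_mul b h.hq t
    have h2 := hd_const_exp (b - a) ε1 t
    have h3 := h1.add h2
    refine (h3).congr_deriv ?_
    ring
  have hHq' : ∀ t, t ≤ s1 → exp (b * t) * z t + ε1 * (b - a) * exp ((b - a) * t) ≤ 0 := by
    intro t ht
    have h1 := hzb t ht
    have h2 : exp (b * t) * z t = exp ((b - a) * t) * (exp (a * t) * z t) := by
      rw [← mul_assoc, exp_mul_exp]
      congr 2
      ring
    have h3 : ε1 * (b - a) = εz := by
      rw [hε1def]
      field_simp
    have h4 := mul_le_mul_of_nonneg_left h1 (exp_pos ((b - a) * t)).le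
    rw [h2, h3]
    nlinarith [exp_pos ((b - a) * t)]
  by_cases hdi : ∃ th, th ≤ s1 ∧ 0 < exp (b * th) * q th + ε1 * exp ((b - a) * th)
  · -- case (b1) : v blows up backward, contradiction via time reversal
    obtain ⟨th, hth, hh⟩ := hdi
    set hval : ℝ := exp (b * th) * q th + ε1 * exp ((b - a) * th) with hhvdef
    have hmq : ∀ t, t ≤ th → hval ≤ exp (b * t) * q t + ε1 * exp ((b - a) * t) := by
      intro t ht
      exact ge_on_Iic hHqd (T := s1) hHq' ht hth
    obtain ⟨T₃, hT₃, hT₃p⟩ := exists_Iic_exp_le ε1 (T₀ := th) (δ := hval / 2)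
      (lam := b - a) (mu := 0) (by positivity) hba
    set e2 : ℝ := hval / 2 with he2def
    have he2 : 0 < e2 := by positivity
    have hq_low : ∀ t, t ≤ T₃ → e2 * exp (-b * t) ≤ q t := by
      intro t ht
      have h1 := hmq t (le_trans ht hT₃)
      have h2 := hT₃p t ht
      simp only [zero_mul, Real.exp_zero, mul_one] at h2
      have h3 : e2 + 0 * exp (0 * t) ≤ exp (b * t) * q t := by
        simp only [zero_mul, mul_zero, add_zero, Real.exp_zero, mul_one]
        rw [he2def]
        linarith
      have h4 := peel_ge (co := b) (d := -b) (nu := 0) (mu := -b) (D := e2) (E := 0) t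
        (by ring) (by ring) h3
      simpa using h4
    -- w is very negative backward
    obtain ⟨T₄, hT₄, hwup0⟩ := stepB_pos (f := w) (f' := fun t => b * w t + q t)
      (-b) (-2 * b) e2 T₃ h.hw he2 (by linarith) (by
        intro t ht
        have h1 := hq_low t ht
        have h2 : b * w t + q t + -b * w t = q t := by ring
        rw [h2]
        have h3 := mul_le_mul_of_nonneg_left h1 (exp_pos (-b * t)).le
        calc e2 * exp (-2 * b * t) = exp (-b * t) * (e2 * exp (-b * t)) := by
              rw [exp_shift (-b) (-b) (-2 * b) t (by ring)]
              ring
          _ ≤ exp (-b * t) * q t := h3)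
    set ε3 : ℝ := e2 / (-(-2 * b)) / 2 with hε3def
    have hε3 : 0 < ε3 := by
      rw [hε3def]
      have : -(-2 * b) = 2 * b := by ring
      rw [this]
      positivity
    have hwup : ∀ t, t ≤ T₄ → w t ≤ -(ε3 * exp (-b * t)) := by
      intro t ht
      have h1 := hwup0 t ht
      have h2 : (-2 * b - -b) = -b := by ring
      rw [h2] at h1
      exact h1
    -- v is exponentially large backward
    obtain ⟨T₅, hT₅, hvlow0⟩ := stepB_neg (f := v) (f' := fun t => a * v t + w t)
      (-a) (-a - b) ε3 T₄ h.hv hε3 (by linarith) (by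
        intro t ht
        have h1 := hwup t ht
        have h2 : a * v t + w t + -a * v t = w t := by ring
        rw [h2]
        have h3 := mul_le_mul_of_nonneg_left h1 (exp_pos (-a * t)).le
        calc exp (-a * t) * w t ≤ exp (-a * t) * -(ε3 * exp (-b * t)) := h3
          _ = -(ε3 * exp ((-a - b) * t)) := by
              rw [exp_shift (-a) (-b) (-a - b) t (by ring)]
              ring)
    set ε4 : ℝ := ε3 / (-(-a - b)) / 2 with hε4def
    have hε4 : 0 < ε4 := by
      rw [hε4def]
      have : -(-a - b) = a + b := by ring
      rw [this]
      positivity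
    have hvlow : ∀ t, t ≤ T₅ → ε4 * exp (-b * t) ≤ v t := by
      intro t ht
      have h1 := hvlow0 t ht
      have h2 : (-a - b - -a) = -b := by ring
      rw [h2] at h1
      exact h1
    -- time reversal and Quad.inf
    refine (h.rev).inf ε4 (-T₅) hε4 ?_
    intro s hs
    have h1 : -s ≤ T₅ := by linarith
    have h2 := hvlow (-s) h1
    have h3 : -b * -s = b * s := by ring
    rw [h3] at h2
    exact h2
  · -- case (b2) : q ≤ -ε1 e^{-a t} backward, then w ≥ ε e^{-a t}, contradiction
    push_neg at hdi
    have hqup : ∀ t, t ≤ s1 → q t ≤ -(ε1 * exp (-a * t)) := by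
      intro t ht
      have h1 := hdi t ht
      have h2 : exp (b * t) * q t ≤ 0 + (-ε1) * exp ((b - a) * t) := by linarith
      have h3 := peel_le (co := b) (d := -b) (nu := b - a) (mu := -a) (D := 0) (E := -ε1) t
        (by ring) (by ring) h2
      simp only [zero_mul] at h3
      linarith
    obtain ⟨T₆, hT₆, hwlow0⟩ := stepB_neg (f := w) (f' := fun t => b * w t + q t)
      (-b) (-a - b) ε1 s1 h.hw hε1 (by linarith) (by
        intro t ht
        have h1 := hqup t ht
        have h2 : b * w t + q t + -b * w t = q t := by ring
        rw [h2]
        have h3 := mul_le_mul_of_nonneg_left h1 (exp_pos (-b * t)).le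
        calc exp (-b * t) * q t ≤ exp (-b * t) * -(ε1 * exp (-a * t)) := h3
          _ = -(ε1 * exp ((-a - b) * t)) := by
              rw [exp_shift (-b) (-a) (-a - b) t (by ring)]
              ring)
    set ε5 : ℝ := ε1 / (-(-a - b)) / 2 with hε5def
    have hε5 : 0 < ε5 := by
      rw [hε5def]
      have : -(-a - b) = a + b := by ring
      rw [this]
      positivity
    refine h.no_pos_w_back a ε5 T₆ ha hε5 ?_
    intro t ht
    have h1 := hwlow0 t ht
    have h2 : (-a - b - -b) = -a := by ring
    rw [h2] at h1
    exact h1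

lemma qpos (h : Quad a b c p v w q z G) : ∀ t, 0 < q t := by
  by_contra hcon
  push_neg at hcon
  obtain ⟨tb, htb⟩ := hcon
  have ha := h.ha
  have hb := h.hb
  have hFq : ∀ t, HasDerivAt (fun t => exp (b * t) * q t) (exp (b * t) * z t) t := by
    intro t
    have := hd_exp_mul b h.hq t
    convert this using 1
    ring
  have hFqm : StrictMono (fun t => exp (b * t) * q t) :=
    strictMono_of_hasDerivAt_pos hFq (fun u => mul_pos (exp_pos _) (h.zpos u))
  set s1 : ℝ := tb - 1 with hs1def
  have hqs1 : exp (b * s1) * q s1 < 0 := by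
    have h1 : exp (b * s1) * q s1 < exp (b * tb) * q tb := hFqm (by rw [hs1def]; linarith)
    have h2 : exp (b * tb) * q tb ≤ 0 := mul_nonpos_of_nonneg_of_nonpos (exp_pos _).le htb
    linarith
  set εq : ℝ := -(exp (b * s1) * q s1) with hεqdef
  have hεq : 0 < εq := by simp only [hεqdef]; linarith
  have hqb : ∀ t, t ≤ s1 → q t ≤ -(εq * exp (-b * t)) := by
    intro t ht
    have h1 := hFqm.monotone ht
    have h2 : exp (b * t) * q t ≤ 0 + (-εq) * exp (0 * t) := by
      simp only [zero_mul, Real.exp_zero, mul_one, zero_add, hεqdef]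
      linarith [h1]
    have h3 := peel_le (co := b) (d := -b) (nu := 0) (mu := -b) (D := 0) (E := -εq) t
      (by ring) (by ring) h2
    simp only [zero_mul] at h3
    linarith
  obtain ⟨T₆, hT₆, hwlow0⟩ := stepB_neg (f := w) (f' := fun t => b * w t + q t)
    (-b) (-2 * b) εq s1 h.hw hεq (by linarith) (by
      intro t ht
      have h1 := hqb t ht
      have h2 : b * w t + q t + -b * w t = q t := by ring
      rw [h2]
      have h3 := mul_le_mul_of_nonneg_left h1 (exp_pos (-b * t)).le
      calc exp (-b * t) * q t ≤ exp (-b * t) * -(εq * exp (-b * t)) := h3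
        _ = -(εq * exp (-2 * b * t)) := by
            rw [exp_shift (-b) (-b) (-2 * b) t (by ring)]
            ring)
  set ε6 : ℝ := εq / (-(-2 * b)) / 2 with hε6def
  have hε6 : 0 < ε6 := by
    rw [hε6def]
    have : -(-2 * b) = 2 * b := by ring
    rw [this]
    positivity
  refine h.no_pos_w_back b ε6 T₆ hb hε6 ?_
  intro t ht
  have h1 := hwlow0 t ht
  have h2 : (-2 * b - -b) = -b := by ring
  rw [h2] at h1
  exact h1

lemma wneg (h : Quad a b c p v w q z G) : ∀ t, w t < 0 := by
  intro t
  by_contra hcon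
  push_neg at hcon
  exact h.fwd t hcon (h.qpos t).le (h.zpos t).le

end Quad





end Stmt15Aux

open Stmt15Aux


/-- Conditions (G) on the nonlinearity `g`, extended to `[0,∞)` by `g 0 = 0`. -/
def CondG (n : ℕ) (g : ℝ → ℝ) : Prop :=
  ContDiffOn ℝ 1 g (Set.Ioi 0) ∧
  (∀ t > 0, 0 < g t) ∧
  Filter.Tendsto g (nhdsWithin 0 (Set.Ioi 0)) (nhds 0) ∧
  (∀ t > 0, g t / t < deriv g t ∧ deriv g t ≤ (((n : ℝ) + 4) / ((n : ℝ) - 4)) * (g t / t)) ∧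
  (∃ β : ℝ, 0 ≤ β ∧ β < (n : ℝ) ^ 2 * ((n : ℝ) - 4) ^ 2 / 16 ∧
    Filter.Tendsto (deriv g) (nhdsWithin 0 (Set.Ioi 0)) (nhds β)) ∧
  (∃ q c : ℝ, 1 < q ∧ 0 < c ∧ ∀ t ≥ 1, c * t ^ q ≤ g t) ∧
  g 0 = 0

/-- `v` solves the ODE `v'''' - A v'' + B v = g(v)` on all of `ℝ`. -/
def IsSol (A B : ℝ) (g v : ℝ → ℝ) : Prop :=
  ∀ t : ℝ, iteratedDeriv 4 v t - A * iteratedDeriv 2 v t + B * v t = g (v t)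

theorem stmt_15 (n : ℕ) (hn : 5 ≤ n) (g : ℝ → ℝ) (hg : CondG n g)
    (A B : ℝ) (hA : A = ((n : ℝ) * ((n : ℝ) - 4) + 8) / 2)
    (hB : B = (n : ℝ) ^ 2 * ((n : ℝ) - 4) ^ 2 / 16)
    (v : ℝ → ℝ) (hv4 : ContDiff ℝ 4 v) (hvpos : ∀ t, 0 < v t) (hvsol : IsSol A B g v) :
    ∀ t : ℝ, deriv v t < (((n : ℝ) - 4) / 2) * v t := by
  have hn5 : (5 : ℝ) ≤ (n : ℝ) := by exact_mod_cast hn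
  set a : ℝ := ((n : ℝ) - 4) / 2 with hadef
  set b : ℝ := (n : ℝ) / 2 with hbdef
  have ha : 0 < a := by rw [hadef]; linarith
  have hab : a < b := by rw [hadef, hbdef]; linarith
  have hA2 : A = a ^ 2 + b ^ 2 := by rw [hA, hadef, hbdef]; ring
  have hB2 : B = a ^ 2 * b ^ 2 := by rw [hB, hadef, hbdef]; ring
  -- differentiability of the iterated derivatives
  set d1 : ℝ → ℝ := deriv v with hd1def
  set d2 : ℝ → ℝ := deriv d1 with hd2def
  set d3 : ℝ → ℝ := deriv d2 with hd3def
  set d4 : ℝ → ℝ := deriv d3 with hd4def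
  have hc4 : ContDiff ℝ ((3 : ℕ) + 1 : ℕ) v := by
    convert hv4 using 2
    norm_num
  have hc3 : ContDiff ℝ 3 d1 := (contDiff_succ_iff_deriv.mp (by exact_mod_cast hc4)).2.2
  have hc3' : ContDiff ℝ ((2 : ℕ) + 1 : ℕ) d1 := by
    convert hc3 using 2
    norm_num
  have hc2 : ContDiff ℝ 2 d2 := (contDiff_succ_iff_deriv.mp (by exact_mod_cast hc3')).2.2
  have hc2' : ContDiff ℝ ((1 : ℕ) + 1 : ℕ) d2 := by
    convert hc2 using 2
    norm_num
  have hc1 : ContDiff ℝ 1 d3 := (contDiff_succ_iff_deriv.mp (by exact_mod_cast hc2')).2.2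
  have hD0 : ∀ t, HasDerivAt v (d1 t) t :=
    fun t => ((hv4.differentiable (by norm_num)) t).hasDerivAt
  have hD1 : ∀ t, HasDerivAt d1 (d2 t) t :=
    fun t => ((hc3.differentiable (by norm_num)) t).hasDerivAt
  have hD2 : ∀ t, HasDerivAt d2 (d3 t) t :=
    fun t => ((hc2.differentiable (by norm_num)) t).hasDerivAt
  have hD3 : ∀ t, HasDerivAt d3 (d4 t) t :=
    fun t => ((hc1.differentiable (by norm_num)) t).hasDerivAt
  -- the ODE in terms of d2, d4
  have hit2 : iteratedDeriv 2 v = d2 := by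
    rw [hd2def, hd1def, iteratedDeriv_succ, iteratedDeriv_one]
  have hit4 : iteratedDeriv 4 v = d4 := by
    rw [hd4def, hd3def, hd2def, hd1def, iteratedDeriv_succ, iteratedDeriv_succ,
      iteratedDeriv_succ, iteratedDeriv_one]
  have hode : ∀ t, d4 t = A * d2 t - B * v t + g (v t) := by
    intro t
    have h1 := hvsol t
    rw [hit2, hit4] at h1
    linarith
  -- growth data
  obtain ⟨p0, c0, hp0, hc0, hgr0⟩ := hg.2.2.2.2.2.1
  -- the quadruple
  have hquad : Quad a b c0 p0 v (fun t => d1 t - a * v t)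
      (fun t => d2 t - (a + b) * d1 t + a * b * v t)
      (fun t => d3 t - a * d2 t - b ^ 2 * d1 t + a * b ^ 2 * v t)
      (fun t => g (v t)) := by
    constructor
    · exact ha
    · exact hab
    · exact hc0
    · exact hp0
    · intro t
      convert hD0 t using 1
      ring
    · intro t
      have := (hD1 t).sub ((hD0 t).const_mul a)
      refine (this).congr_deriv ?_
      ring
    · intro t
      have := ((hD2 t).sub ((hD1 t).const_mul (a + b))).add ((hD0 t).const_mul (a * b))
      refine (this).congr_deriv ?_
      ring
    · intro t
      have := (((hD3 t).sub ((hD2 t).const_mul a)).sub ((hD1 t).const_mul (b ^ 2))).add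
        ((hD0 t).const_mul (a * b ^ 2))
      refine (this).congr_deriv ?_
      rw [hode t, hA2, hB2]
      ring
    · exact hvpos
    · exact fun t => hg.2.1 (v t) (hvpos t)
    · exact fun t ht => hgr0 (v t) ht
  have hw := hquad.wneg
  intro t
  have h1 := hw t
  rw [hadef] at *
  linarith
end
end

section
/- Let n ≥ 5 be an integer, A = (n(n-4)+8)/2, B = n²(n-4)²/16, and let v : ℝ → ℝ be a C⁴ function. Define u on ℝⁿ \ {0} by u(x) = |x|^{−(n−4)/2}·v(ln|x|). Then u is C⁴ on ℝⁿ \ {0} and for every x ∈ ℝⁿ \ {0}, Δ²u(x) = |x|^{−(n+4)/2}·( v''''(ln|x|) − A·v''(ln|x|) + B·v(ln|x|) ). In particular, u solves Δ²u(x) = |x|^{−(n+4)/2}·g(|x|^{(n−4)/2}·u(x)) on ℝⁿ \ {0} if and only if v solves v'''' − A·v'' + B·v = g(v) on ℝ (for any function g on (0,∞), when v > 0). -/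
open Real Filter Set

noncomputable section

/-- The Laplacian of `f : ℝⁿ → ℝ`, as the sum of the second partial derivatives. -/
def lap (n : ℕ) (f : EuclideanSpace ℝ (Fin n) → ℝ) (x : EuclideanSpace ℝ (Fin n)) : ℝ :=
  ∑ i : Fin n,
    fderiv ℝ (fun y => fderiv ℝ f y (EuclideanSpace.single i 1)) x (EuclideanSpace.single i 1)

/-- The Bilaplacian `Δ² = Δ ∘ Δ`. -/
def bilap (n : ℕ) (f : EuclideanSpace ℝ (Fin n) → ℝ) : EuclideanSpace ℝ (Fin n) → ℝ :=
  lap n (lap n f)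

lemma lap_congr' {n : ℕ} {f g : EuclideanSpace ℝ (Fin n) → ℝ} {x : EuclideanSpace ℝ (Fin n)}
    (h : f =ᶠ[nhds x] g) : lap n f x = lap n g x := by
  unfold lap
  refine Finset.sum_congr rfl fun i _ => ?_
  have h1 : (fun y => fderiv ℝ f y (EuclideanSpace.single i 1)) =ᶠ[nhds x]
      (fun y => fderiv ℝ g y (EuclideanSpace.single i 1)) :=
    (h.fderiv (𝕜 := ℝ)).mono fun y hy => by simp only [hy]
  rw [h1.fderiv_eq]

lemma hasDerivAt_Phi (γ : ℝ) (w w1 : ℝ → ℝ) (hw : ∀ t, HasDerivAt w (w1 t) t)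
    {s : ℝ} (hs : 0 < s) :
    HasDerivAt (fun s : ℝ => s ^ γ * w (Real.log s / 2))
      (s ^ (γ - 1) * (γ * w (Real.log s / 2) + w1 (Real.log s / 2) / 2)) s := by
  have h1 : HasDerivAt (fun s : ℝ => s ^ γ) (γ * s ^ (γ - 1)) s :=
    Real.hasDerivAt_rpow_const (Or.inl hs.ne')
  have h2 : HasDerivAt (fun s : ℝ => w (Real.log s / 2)) (w1 (Real.log s / 2) * (s⁻¹ / 2)) s :=
    (hw _).comp s ((Real.hasDerivAt_log hs.ne').div_const 2)
  have : HasDerivAt (fun s : ℝ => s ^ γ * w (Real.log s / 2)) _ s := h1.mul h2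
  convert this using 1
  rw [Real.rpow_sub_one hs.ne']
  field_simp

lemma sum_coord_sq {n : ℕ} (x : EuclideanSpace ℝ (Fin n)) :
    ∑ i : Fin n, (x i) ^ 2 = ‖x‖ ^ 2 := by
  rw [EuclideanSpace.norm_eq, Real.sq_sqrt (by positivity)]
  simp

lemma lap_Phi (n : ℕ) (γ : ℝ) (w w1 w2 : ℝ → ℝ)
    (hw : ∀ t, HasDerivAt w (w1 t) t) (hw1 : ∀ t, HasDerivAt w1 (w2 t) t)
    {x : EuclideanSpace ℝ (Fin n)} (hx : x ≠ 0) :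
    lap n (fun y => (‖y‖ ^ 2 : ℝ) ^ γ * w (Real.log (‖y‖ ^ 2) / 2)) x
      = (‖x‖ ^ 2 : ℝ) ^ (γ - 1) *
        ((4 * γ ^ 2 + (2 * (n : ℝ) - 4) * γ) * w (Real.log (‖x‖ ^ 2) / 2)
          + (4 * γ - 2 + (n : ℝ)) * w1 (Real.log (‖x‖ ^ 2) / 2)
          + w2 (Real.log (‖x‖ ^ 2) / 2)) := by
  set F : ℝ → ℝ := fun s => s ^ γ * w (Real.log s / 2) with hF
  set F1 : ℝ → ℝ := fun s => s ^ (γ - 1) * (γ * w (Real.log s / 2) + w1 (Real.log s / 2) / 2)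
    with hF1def
  set F2 : ℝ → ℝ := fun s => s ^ (γ - 1 - 1) *
      ((γ - 1) * (γ * w (Real.log s / 2) + w1 (Real.log s / 2) / 2)
        + (γ * w1 (Real.log s / 2) + w2 (Real.log s / 2) / 2) / 2) with hF2def
  have hF1 : ∀ s : ℝ, 0 < s → HasDerivAt F (F1 s) s := fun s hs =>
    hasDerivAt_Phi γ w w1 hw hs
  have hF2 : ∀ s : ℝ, 0 < s → HasDerivAt F1 (F2 s) s := fun s hs =>
    hasDerivAt_Phi (γ - 1) (fun t => γ * w t + w1 t / 2) (fun t => γ * w1 t + w2 t / 2)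
      (fun t => ((hw t).const_mul γ).add ((hw1 t).div_const 2)) hs
  have hqpos : ∀ y : EuclideanSpace ℝ (Fin n), y ≠ 0 → (0 : ℝ) < ‖y‖ ^ 2 := by
    intro y hy
    have : ‖y‖ ≠ 0 := norm_ne_zero_iff.mpr hy
    positivity
  have hDq : ∀ y : EuclideanSpace ℝ (Fin n),
      HasFDerivAt (fun y : EuclideanSpace ℝ (Fin n) => ‖y‖ ^ 2) (2 • (innerSL ℝ y)) y :=
    fun y => (hasStrictFDerivAt_norm_sq y).hasFDerivAt
  have hFq : ∀ y : EuclideanSpace ℝ (Fin n), y ≠ 0 →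
      HasFDerivAt (fun y : EuclideanSpace ℝ (Fin n) => F (‖y‖ ^ 2))
        ((F1 (‖y‖ ^ 2)) • (2 • (innerSL ℝ y))) y := fun y hy =>
    by have := (hF1 _ (hqpos y hy)).comp_hasFDerivAt y (hDq y); exact this
  have key : ∀ i : Fin n,
      fderiv ℝ (fun y => fderiv ℝ (fun y : EuclideanSpace ℝ (Fin n) => F (‖y‖ ^ 2)) y
          (EuclideanSpace.single i 1)) x (EuclideanSpace.single i 1)
        = F1 (‖x‖ ^ 2) * 2 + 2 * x i * (F2 (‖x‖ ^ 2) * (2 * x i)) := by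
    intro i
    have hEq : (fun y => fderiv ℝ (fun y : EuclideanSpace ℝ (Fin n) => F (‖y‖ ^ 2)) y
          (EuclideanSpace.single i 1)) =ᶠ[nhds x]
        (fun y => F1 (‖y‖ ^ 2) * (2 * y i)) := by
      filter_upwards [IsOpen.mem_nhds isOpen_compl_singleton hx] with y hy
      have hy' : y ≠ 0 := hy
      rw [(hFq y hy').fderiv]
      simp [EuclideanSpace.inner_single_right, real_inner_comm]
    have hc : HasFDerivAt (fun y : EuclideanSpace ℝ (Fin n) => F1 (‖y‖ ^ 2))
        ((F2 (‖x‖ ^ 2)) • (2 • (innerSL ℝ x))) x :=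
      by have := (hF2 _ (hqpos x hx)).comp_hasFDerivAt x (hDq x); exact this
    have hd : HasFDerivAt (fun y : EuclideanSpace ℝ (Fin n) => 2 * y i)
        ((2 : ℝ) • (EuclideanSpace.proj (𝕜 := ℝ) i)) x :=
      (EuclideanSpace.proj (𝕜 := ℝ) i).hasFDerivAt.const_mul 2
    have hprod : HasFDerivAt (fun y : EuclideanSpace ℝ (Fin n) => F1 (‖y‖ ^ 2) * (2 * y i)) _ x :=
      hc.mul hd
    rw [hEq.fderiv_eq, hprod.fderiv]
    simp [EuclideanSpace.inner_single_right, real_inner_comm, EuclideanSpace.single_apply]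
  unfold lap
  have : ∑ i : Fin n, fderiv ℝ (fun y => fderiv ℝ
        (fun y : EuclideanSpace ℝ (Fin n) => F (‖y‖ ^ 2)) y (EuclideanSpace.single i 1)) x
        (EuclideanSpace.single i 1)
      = (n : ℝ) * (F1 (‖x‖ ^ 2) * 2) + 4 * F2 (‖x‖ ^ 2) * ‖x‖ ^ 2 := by
    rw [Finset.sum_congr rfl fun i _ => key i]
    have e : ∀ i : Fin n, F1 (‖x‖ ^ 2) * 2 + 2 * x i * (F2 (‖x‖ ^ 2) * (2 * x i))
        = F1 (‖x‖ ^ 2) * 2 + 4 * F2 (‖x‖ ^ 2) * (x i) ^ 2 := fun i => by ring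
    rw [Finset.sum_congr rfl fun i _ => e i, Finset.sum_add_distrib, Finset.sum_const,
      ← Finset.mul_sum, sum_coord_sq x]
    simp [nsmul_eq_mul]
  rw [this]
  have hs := hqpos x hx
  rw [hF1def, hF2def]
  simp only
  have e2 : (‖x‖ ^ 2 : ℝ) ^ (γ - 1 - 1) = (‖x‖ ^ 2) ^ γ / (‖x‖ ^ 2) / (‖x‖ ^ 2) := by
    rw [Real.rpow_sub_one hs.ne', Real.rpow_sub_one hs.ne']
  have e1 : (‖x‖ ^ 2 : ℝ) ^ (γ - 1) = (‖x‖ ^ 2) ^ γ / (‖x‖ ^ 2) := Real.rpow_sub_one hs.ne' _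
  rw [e2, e1]
  field_simp
  ring

theorem stmt_16 (n : ℕ) (hn : 5 ≤ n)
    (A B : ℝ) (hA : A = ((n : ℝ) * ((n : ℝ) - 4) + 8) / 2)
    (hB : B = (n : ℝ) ^ 2 * ((n : ℝ) - 4) ^ 2 / 16)
    (v : ℝ → ℝ) (hv : ContDiff ℝ 4 v)
    (u : EuclideanSpace ℝ (Fin n) → ℝ)
    (hu : ∀ x : EuclideanSpace ℝ (Fin n),
      u x = ‖x‖ ^ (-(((n : ℝ) - 4) / 2)) * v (Real.log ‖x‖)) :
    ContDiffOn ℝ 4 u {(0 : EuclideanSpace ℝ (Fin n))}ᶜ ∧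
    (∀ x : EuclideanSpace ℝ (Fin n), x ≠ 0 →
      bilap n u x = ‖x‖ ^ (-(((n : ℝ) + 4) / 2)) *
        (iteratedDeriv 4 v (Real.log ‖x‖) - A * iteratedDeriv 2 v (Real.log ‖x‖)
          + B * v (Real.log ‖x‖))) ∧
    (∀ g : ℝ → ℝ, (∀ t, 0 < v t) →
      ((∀ x : EuclideanSpace ℝ (Fin n), x ≠ 0 →
          bilap n u x = ‖x‖ ^ (-(((n : ℝ) + 4) / 2)) * g (‖x‖ ^ (((n : ℝ) - 4) / 2) * u x)) ↔
        (∀ t : ℝ, iteratedDeriv 4 v t - A * iteratedDeriv 2 v t + B * v t = g (v t)))) := by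
  have hn5 : (5 : ℝ) ≤ (n : ℝ) := by exact_mod_cast hn
  set β : ℝ := -(((n : ℝ) - 4) / 4) with hβ
  have hβne : β ≠ 0 := by rw [hβ]; intro h; nlinarith [h]
  have hexpne : -(((n : ℝ) - 4) / 2) ≠ 0 := by intro h; nlinarith [h]
  -- derivative chain
  set v1 : ℝ → ℝ := deriv v with hv1def
  set v2 : ℝ → ℝ := deriv v1 with hv2def
  set v3 : ℝ → ℝ := deriv v2 with hv3def
  set v4 : ℝ → ℝ := deriv v3 with hv4def
  have hc3 : ContDiff ℝ 3 v1 := by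
    have h := (contDiff_succ_iff_deriv (n := 3)).mp (by exact_mod_cast hv)
    exact h.2.2
  have hc2 : ContDiff ℝ 2 v2 := by
    have h := (contDiff_succ_iff_deriv (n := 2)).mp (by exact_mod_cast hc3)
    exact h.2.2
  have hc1 : ContDiff ℝ 1 v3 := by
    have h := (contDiff_succ_iff_deriv (n := 1)).mp (by exact_mod_cast hc2)
    exact h.2.2
  have hd0 : ∀ t, HasDerivAt v (v1 t) t := fun t =>
    ((hv.differentiable (by norm_num)) t).hasDerivAt
  have hd1 : ∀ t, HasDerivAt v1 (v2 t) t := fun t =>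
    ((hc3.differentiable (by norm_num)) t).hasDerivAt
  have hd2 : ∀ t, HasDerivAt v2 (v3 t) t := fun t =>
    ((hc2.differentiable (by norm_num)) t).hasDerivAt
  have hd3 : ∀ t, HasDerivAt v3 (v4 t) t := fun t =>
    ((hc1.differentiable (by norm_num)) t).hasDerivAt
  have hit2 : iteratedDeriv 2 v = v2 := by
    rw [show (2:ℕ) = 0 + 1 + 1 from rfl, iteratedDeriv_succ, iteratedDeriv_succ,
      iteratedDeriv_zero, hv2def, hv1def]
  have hit4 : iteratedDeriv 4 v = v4 := by
    rw [show (4:ℕ) = 0 + 1 + 1 + 1 + 1 from rfl, iteratedDeriv_succ, iteratedDeriv_succ,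
      iteratedDeriv_succ, iteratedDeriv_succ, iteratedDeriv_zero,
      hv4def, hv3def, hv2def, hv1def]
  -- rewriting u
  have hpow : ∀ y : EuclideanSpace ℝ (Fin n), y ≠ 0 →
      (‖y‖ ^ 2 : ℝ) ^ β = ‖y‖ ^ (-(((n : ℝ) - 4) / 2)) := by
    intro y hy
    rw [← Real.rpow_natCast ‖y‖ 2, ← Real.rpow_mul (norm_nonneg y)]
    norm_num
    rw [hβ]
    ring_nf
  have hlog : ∀ y : EuclideanSpace ℝ (Fin n), Real.log (‖y‖ ^ 2) / 2 = Real.log ‖y‖ := by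
    intro y
    rw [Real.log_pow]
    push_cast
    ring
  have hu' : u = fun y => (‖y‖ ^ 2 : ℝ) ^ β * v (Real.log (‖y‖ ^ 2) / 2) := by
    funext y
    by_cases hy : y = 0
    · subst hy
      rw [hu 0]
      simp [Real.zero_rpow hexpne, Real.zero_rpow hβne]
    · rw [hu y, hpow y hy, hlog y]
  -- Part 1 : smoothness
  have part1 : ContDiffOn ℝ 4 u {(0 : EuclideanSpace ℝ (Fin n))}ᶜ := by
    rw [hu']
    intro x hx
    have hx' : x ≠ 0 := hx
    have hq : ContDiffAt ℝ 4 (fun y : EuclideanSpace ℝ (Fin n) => ‖y‖ ^ 2) x :=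
      (contDiff_norm_sq ℝ).contDiffAt
    have hqx : (‖x‖ ^ 2 : ℝ) ≠ 0 := by
      have : ‖x‖ ≠ 0 := norm_ne_zero_iff.mpr hx'
      positivity
    have h1 : ContDiffAt ℝ 4 (fun y : EuclideanSpace ℝ (Fin n) => (‖y‖ ^ 2 : ℝ) ^ β) x :=
      show ContDiffAt ℝ 4 ((fun s : ℝ => s ^ β) ∘ (fun y : EuclideanSpace ℝ (Fin n) => ‖y‖ ^ 2)) x from
        (Real.contDiffAt_rpow_const_of_ne hqx).comp x hq
    have h2 : ContDiffAt ℝ 4 (fun y : EuclideanSpace ℝ (Fin n) =>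
        v (Real.log (‖y‖ ^ 2) / 2)) x :=
      hv.contDiffAt.comp x (((Real.contDiffAt_log.mpr hqx).comp x hq).div_const 2)
    exact (h1.mul h2).contDiffWithinAt
  -- Part 2 : the bilaplacian formula
  set a0 : ℝ := 4 * β ^ 2 + (2 * (n : ℝ) - 4) * β with ha0
  set a1 : ℝ := 4 * β - 2 + (n : ℝ) with ha1
  set b0 : ℝ := 4 * (β - 1) ^ 2 + (2 * (n : ℝ) - 4) * (β - 1) with hb0
  set b1 : ℝ := 4 * (β - 1) - 2 + (n : ℝ) with hb1
  set w : ℝ → ℝ := fun t => a0 * v t + a1 * v1 t + v2 t with hwdef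
  set w' : ℝ → ℝ := fun t => a0 * v1 t + a1 * v2 t + v3 t with hw'def
  set w'' : ℝ → ℝ := fun t => a0 * v2 t + a1 * v3 t + v4 t with hw''def
  have hw : ∀ t, HasDerivAt w (w' t) t := fun t =>
    (((hd0 t).const_mul a0).add ((hd1 t).const_mul a1)).add (hd2 t)
  have hw' : ∀ t, HasDerivAt w' (w'' t) t := fun t =>
    (((hd1 t).const_mul a0).add ((hd2 t).const_mul a1)).add (hd3 t)
  have hlapu : ∀ y : EuclideanSpace ℝ (Fin n), y ≠ 0 →
      lap n u y = (‖y‖ ^ 2 : ℝ) ^ (β - 1) * w (Real.log (‖y‖ ^ 2) / 2) := by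
    intro y hy
    rw [hu']
    rw [lap_Phi n β v v1 v2 hd0 hd1 hy]
  have hbilap : ∀ x : EuclideanSpace ℝ (Fin n), x ≠ 0 →
      bilap n u x = (‖x‖ ^ 2 : ℝ) ^ (β - 1 - 1) *
        (b0 * w (Real.log (‖x‖ ^ 2) / 2) + b1 * w' (Real.log (‖x‖ ^ 2) / 2)
          + w'' (Real.log (‖x‖ ^ 2) / 2)) := by
    intro x hx
    have hcongr : lap n u =ᶠ[nhds x]
        (fun y => (‖y‖ ^ 2 : ℝ) ^ (β - 1) * w (Real.log (‖y‖ ^ 2) / 2)) := by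
      filter_upwards [IsOpen.mem_nhds isOpen_compl_singleton hx] with y hy
      exact hlapu y hy
    have : bilap n u x
        = lap n (fun y => (‖y‖ ^ 2 : ℝ) ^ (β - 1) * w (Real.log (‖y‖ ^ 2) / 2)) x :=
      lap_congr' hcongr
    rw [this, lap_Phi n (β - 1) w w' w'' hw hw' hx, hb0, hb1]
  have hpow2 : ∀ x : EuclideanSpace ℝ (Fin n), x ≠ 0 →
      (‖x‖ ^ 2 : ℝ) ^ (β - 1 - 1) = ‖x‖ ^ (-(((n : ℝ) + 4) / 2)) := by
    intro x hx
    rw [← Real.rpow_natCast ‖x‖ 2, ← Real.rpow_mul (norm_nonneg x)]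
    norm_num
    rw [hβ]
    ring_nf
  have part2 : ∀ x : EuclideanSpace ℝ (Fin n), x ≠ 0 →
      bilap n u x = ‖x‖ ^ (-(((n : ℝ) + 4) / 2)) *
        (iteratedDeriv 4 v (Real.log ‖x‖) - A * iteratedDeriv 2 v (Real.log ‖x‖)
          + B * v (Real.log ‖x‖)) := by
    intro x hx
    rw [hbilap x hx, hpow2 x hx, hlog x, hit4, hit2]
    congr 1
    rw [hwdef, hw'def, hw''def]
    simp only
    rw [ha0, ha1, hA, hB, hβ]
    ring
  refine ⟨part1, part2, ?_⟩
  -- Part 3 : equivalence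
  intro g hvpos
  have hval : ∀ x : EuclideanSpace ℝ (Fin n), x ≠ 0 →
      ‖x‖ ^ (((n : ℝ) - 4) / 2) * u x = v (Real.log ‖x‖) := by
    intro x hx
    have hnx : (0 : ℝ) < ‖x‖ := norm_pos_iff.mpr hx
    rw [hu x, ← mul_assoc, ← Real.rpow_add hnx]
    simp
  constructor
  · intro hsol t
    have hn0 : 0 < n := by omega
    set x : EuclideanSpace ℝ (Fin n) := EuclideanSpace.single (⟨0, hn0⟩ : Fin n) (Real.exp t)
      with hxdef
    have hnorm : ‖x‖ = Real.exp t := by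
      rw [hxdef, EuclideanSpace.norm_single]
      exact abs_of_pos (Real.exp_pos t)
    have hxne : x ≠ 0 := by
      intro h
      have := hnorm
      rw [h, norm_zero] at this
      exact (Real.exp_pos t).ne this
    have h1 := part2 x hxne
    have h2 := hsol x hxne
    rw [hval x hxne] at h2
    rw [h2] at h1
    have hlogx : Real.log ‖x‖ = t := by rw [hnorm, Real.log_exp]
    rw [hlogx] at h1
    have hpos : (0 : ℝ) < ‖x‖ ^ (-(((n : ℝ) + 4) / 2)) :=
      Real.rpow_pos_of_pos (norm_pos_iff.mpr hxne) _
    exact (mul_left_cancel₀ hpos.ne' h1.symm)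
  · intro hode x hx
    rw [part2 x hx, hval x hx, hode (Real.log ‖x‖)]
end
end

section
/- Let n ≥ 5 be an integer and let φ be a C⁴ function on ℝⁿ \ {0}. Define its Kelvin transform φ*(x) = |x|^{−(n−4)}·φ(x/|x|²) for x ∈ ℝⁿ \ {0}. Then for all x ∈ ℝⁿ \ {0}, Δ²φ*(x) = |x|^{−n−4}·(Δ²φ)(x/|x|²). -/
open Real Filter Set

noncomputable section

abbrev Er (n : ℕ) := EuclideanSpace ℝ (Fin n)
variable {n : ℕ}
def ee (n : ℕ) (i : Fin n) : Er n := EuclideanSpace.single i 1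
def pd (i : Fin n) (f : Er n → ℝ) (x : Er n) : ℝ := fderiv ℝ f x (ee n i)
def qq (x : Er n) : ℝ := ‖x‖ ^ 2
def PP (b : ℝ) (x : Er n) : ℝ := qq x ^ b
def inv0 (x : Er n) : Er n := (‖x‖ ^ 2)⁻¹ • x

lemma clm_expand (L : Er n →L[ℝ] ℝ) (v : Er n) : L v = ∑ j, v j * L (ee n j) := by
  have hv : v = ∑ j, v j • ee n j := by
    ext k
    have h2 : (∑ j, v j • ee n j) k = ∑ j, (v j • ee n j) k := by
      induction (Finset.univ : Finset (Fin n)) using Finset.induction_on with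
      | empty => rfl
      | @insert _ _ h ih => rw [Finset.sum_insert h, Finset.sum_insert h, ← ih]; rfl
    rw [h2]
    simp [ee, EuclideanSpace.single_apply]
  conv_lhs => rw [hv]
  simp [smul_eq_mul]

section pdrules
variable {f g : Er n → ℝ} {x : Er n} {i : Fin n}

lemma pd_congr_nhds (h : f =ᶠ[nhds x] g) : pd i f x = pd i g x := by
  unfold pd; rw [h.fderiv_eq]

lemma pd_mul (hf : DifferentiableAt ℝ f x) (hg : DifferentiableAt ℝ g x) :
    pd i (fun z => f z * g z) x = f x * pd i g x + g x * pd i f x := by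
  unfold pd
  rw [fderiv_fun_mul hf hg]
  simp [smul_eq_mul]

lemma pd_add (hf : DifferentiableAt ℝ f x) (hg : DifferentiableAt ℝ g x) :
    pd i (fun z => f z + g z) x = pd i f x + pd i g x := by
  unfold pd; rw [fderiv_fun_add hf hg]; simp

lemma pd_sub (hf : DifferentiableAt ℝ f x) (hg : DifferentiableAt ℝ g x) :
    pd i (fun z => f z - g z) x = pd i f x - pd i g x := by
  unfold pd; rw [fderiv_fun_sub hf hg]; simp

lemma pd_const_mul (c : ℝ) (hf : DifferentiableAt ℝ f x) :
    pd i (fun z => c * f z) x = c * pd i f x := by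
  unfold pd; rw [fderiv_const_mul hf]; simp

lemma pd_sum {m : ℕ} (F : Fin m → Er n → ℝ)
    (hF : ∀ j, DifferentiableAt ℝ (F j) x) :
    pd i (fun z => ∑ j, F j z) x = ∑ j, pd i (F j) x := by
  unfold pd
  rw [fderiv_fun_sum (fun j _ => hF j)]
  simp

lemma pd_coord (j : Fin n) (x : Er n) : pd i (fun z : Er n => z j) x = if i = j then 1 else 0 := by
  have h : (fun z : Er n => z j) = fun z => EuclideanSpace.proj (𝕜 := ℝ) j z := rfl
  unfold pd
  rw [h, (EuclideanSpace.proj (𝕜 := ℝ) j).fderiv]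
  simp [ee, EuclideanSpace.single_apply, eq_comm]

lemma diff_coord {j : Fin n} {x : Er n} : DifferentiableAt ℝ (fun z : Er n => z j) x :=
  (EuclideanSpace.proj (𝕜 := ℝ) j).differentiableAt

end pdrules

variable {x : Er n} {i : Fin n} {b : ℝ}

lemma qq_pos (hx : x ≠ 0) : 0 < qq x := by
  have : 0 < ‖x‖ := norm_pos_iff.2 hx
  unfold qq; positivity
lemma qq_ne (hx : x ≠ 0) : qq x ≠ 0 := (qq_pos hx).ne'
lemma qq_sum : qq x = ∑ i, x i ^ 2 := by
  unfold qq
  rw [EuclideanSpace.norm_eq]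
  rw [Real.sq_sqrt (by positivity)]
  simp [sq_abs]

lemma PP_mul (hx : x ≠ 0) (a b : ℝ) : PP a x * PP b x = PP (a + b) x := by
  unfold PP; rw [← Real.rpow_add (qq_pos hx)]
lemma PP_one : PP 1 x = qq x := Real.rpow_one _
lemma PP_zero : PP 0 x = 1 := Real.rpow_zero _
lemma PP_neg_one : PP (-1) x = (qq x)⁻¹ := Real.rpow_neg_one _
lemma PP_qq (hx : x ≠ 0) : PP b x * qq x = PP (b + 1) x := by
  rw [← PP_one (x := x), PP_mul hx]
lemma PP_pos (hx : x ≠ 0) : 0 < PP b x := Real.rpow_pos_of_pos (qq_pos hx) _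

lemma sum_mul_single (v : Er n) (i : Fin n) : ∑ k, v k * ee n i k = v i := by
  simp [ee, EuclideanSpace.single_apply]

lemma hasFDerivAt_qq : HasFDerivAt (qq (n := n)) (2 • (innerSL ℝ x).comp (ContinuousLinearMap.id ℝ (Er n))) x :=
  (hasFDerivAt_id x).norm_sq

lemma pd_qq : pd i (qq (n := n)) x = 2 * x i := by
  unfold pd
  rw [hasFDerivAt_qq.fderiv]
  simp [sum_mul_single]
  simp [ee, EuclideanSpace.inner_single_right]

lemma diff_qq : DifferentiableAt ℝ (qq (n := n)) x := hasFDerivAt_qq.differentiableAt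

lemma hasFDerivAt_PP (hx : x ≠ 0) :
    HasFDerivAt (PP b) ((b * qq x ^ (b - 1)) • (2 • (innerSL ℝ x).comp (ContinuousLinearMap.id ℝ (Er n)))) x :=
  (Real.hasDerivAt_rpow_const (p := b) (Or.inl (qq_ne hx))).comp_hasFDerivAt x hasFDerivAt_qq

lemma pd_PP (hx : x ≠ 0) : pd i (PP b) x = 2 * b * PP (b - 1) x * x i := by
  unfold pd
  rw [(hasFDerivAt_PP hx).fderiv]
  simp [sum_mul_single, PP]
  have hin : inner ℝ x (ee n i) = x i := by simp [ee, EuclideanSpace.inner_single_right]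
  rw [hin]
  ring

lemma diff_PP (hx : x ≠ 0) : DifferentiableAt ℝ (PP b) x := (hasFDerivAt_PP hx).differentiableAt

lemma contDiffAt_PP {k : WithTop ℕ∞} (hx : x ≠ 0) : ContDiffAt ℝ k (PP b) x :=
  (Real.contDiffAt_rpow_const_of_ne (qq_ne hx)).comp x (contDiff_norm_sq ℝ).contDiffAt

lemma contDiffAt_inv0 {k : WithTop ℕ∞} (hx : x ≠ 0) : ContDiffAt ℝ k (inv0 (n := n)) x := by
  have h1 : ContDiffAt ℝ k (fun z : Er n => (‖z‖ ^ 2)⁻¹) x :=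
    ((contDiff_norm_sq ℝ).contDiffAt).inv (qq_ne hx)
  exact h1.smul contDiffAt_id

lemma diff_inv0 (hx : x ≠ 0) : DifferentiableAt ℝ (inv0 (n := n)) x :=
  (contDiffAt_inv0 (k := 1) hx).differentiableAt one_ne_zero

lemma inv0_ne (hx : x ≠ 0) : inv0 x ≠ 0 := by
  unfold inv0
  exact smul_ne_zero (inv_ne_zero (qq_ne hx)) hx

lemma qq_inv0 (hx : x ≠ 0) : qq (inv0 x) = (qq x)⁻¹ := by
  have h : (0:ℝ) < ‖x‖ ^ 2 := qq_pos hx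
  unfold qq inv0
  rw [norm_smul, mul_pow, norm_inv, norm_pow, norm_norm]
  field_simp

lemma inv0_coord (z : Er n) (j : Fin n) : inv0 z j = PP (-1) z * z j := by
  unfold inv0
  rw [PP_neg_one]
  simp [qq]

lemma inv0_inv0 (hx : x ≠ 0) : inv0 (inv0 x) = x := by
  unfold inv0
  rw [show ‖(‖x‖^2)⁻¹ • x‖^2 = ((‖x‖^2)⁻¹)^2 * ‖x‖^2 by rw [norm_smul]; simp [mul_pow]]
  rw [smul_smul]
  have h : (0:ℝ) < ‖x‖ ^ 2 := qq_pos hx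
  rw [show ((‖x‖^2)⁻¹^2 * ‖x‖^2)⁻¹ * (‖x‖^2)⁻¹ = 1 by field_simp]
  rw [one_smul]


variable {f g ψ : Er n → ℝ} {j : Fin n}

lemma lap_pd (f : Er n → ℝ) (x : Er n) : lap n f x = ∑ i, pd i (pd i f) x := rfl

def AA (i j : Fin n) (x : Er n) : ℝ := (if i = j then PP (-1) x else 0) - 2 * PP (-2) x * x i * x j

lemma pd_inv0_coord (hx : x ≠ 0) (j : Fin n) : pd i (fun z => inv0 z j) x = AA i j x := by
  have hfun : (fun z : Er n => inv0 z j) = fun z => PP (-1) z * z j := funext (fun z => inv0_coord z j)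
  rw [hfun, pd_mul (diff_PP hx) diff_coord, pd_PP hx, pd_coord]
  unfold AA
  norm_num
  split <;> ring

lemma diff_AA (hx : x ≠ 0) : DifferentiableAt ℝ (AA i j) x := by
  unfold AA
  apply DifferentiableAt.sub
  · by_cases h : i = j <;> simp [h]
    exact diff_PP hx
  · exact (((diff_PP hx).const_mul 2).mul diff_coord).mul diff_coord

lemma mem_nhdsU (hx : x ≠ 0) : {(0 : Er n)}ᶜ ∈ nhds x :=
  isOpen_compl_singleton.mem_nhds hx

lemma pd_comp_inv0 (hψ : DifferentiableAt ℝ ψ (inv0 x)) (hx : x ≠ 0) :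
    pd i (fun z => ψ (inv0 z)) x = ∑ j, pd j ψ (inv0 x) * AA i j x := by
  have hσ := diff_inv0 (n := n) hx
  have hc : fderiv ℝ (fun z => ψ (inv0 z)) x = (fderiv ℝ ψ (inv0 x)).comp (fderiv ℝ inv0 x) :=
    fderiv_comp x hψ hσ
  unfold pd
  rw [hc, ContinuousLinearMap.comp_apply,
    clm_expand (fderiv ℝ ψ (inv0 x)) (fderiv ℝ inv0 x (ee n i))]
  refine Finset.sum_congr rfl (fun j _ => ?_)
  have hproj : fderiv ℝ inv0 x (ee n i) j = pd i (fun z => inv0 z j) x := by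
    have h2 : HasFDerivAt (fun z : Er n => inv0 z j)
        ((EuclideanSpace.proj (𝕜 := ℝ) j).comp (fderiv ℝ inv0 x)) x :=
      (EuclideanSpace.proj (𝕜 := ℝ) j).hasFDerivAt.comp x hσ.hasFDerivAt
    unfold pd
    rw [h2.fderiv]
    rfl
  rw [hproj, pd_inv0_coord hx j, mul_comm]

lemma cdAt {k : WithTop ℕ∞} (hf : ContDiffOn ℝ k f {(0 : Er n)}ᶜ) (hx : x ≠ 0) :
    ContDiffAt ℝ k f x :=
  hf.contDiffAt (mem_nhdsU hx)

lemma diffAt {k : ℕ} (hf : ContDiffOn ℝ (k+1) f {(0 : Er n)}ᶜ) (hx : x ≠ 0) :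
    DifferentiableAt ℝ f x :=
  (cdAt hf hx).differentiableAt (by simp)

lemma cdOn_pd {k : ℕ} (hf : ContDiffOn ℝ (k+1) f {(0 : Er n)}ᶜ) :
    ContDiffOn ℝ k (pd i f) {(0 : Er n)}ᶜ := by
  have h1 : ContDiffOn ℝ k (fderiv ℝ f) {(0 : Er n)}ᶜ :=
    hf.fderiv_of_isOpen isOpen_compl_singleton (by exact_mod_cast le_rfl)
  exact h1.clm_apply contDiffOn_const

lemma cdOn_lap {k : ℕ} (hf : ContDiffOn ℝ (k+2) f {(0 : Er n)}ᶜ) :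
    ContDiffOn ℝ k (lap n f) {(0 : Er n)}ᶜ := by
  have : ∀ i : Fin n, ContDiffOn ℝ k (pd i (pd i f)) {(0 : Er n)}ᶜ :=
    fun i => cdOn_pd (cdOn_pd hf)
  have hsum : ContDiffOn ℝ k (fun x => ∑ i, pd i (pd i f) x) {(0 : Er n)}ᶜ :=
    ContDiffOn.sum (fun i _ => this i)
  exact hsum

lemma pd_symm (hf : ContDiffOn ℝ 2 f {(0 : Er n)}ᶜ) (hx : x ≠ 0) :
    pd i (pd j f) x = pd j (pd i f) x := by
  have hC : ContDiffAt ℝ 2 f x := cdAt hf hx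
  have hsym := hC.isSymmSndFDerivAt (by simp [minSmoothness_of_isRCLikeNormedField])
  have hd : DifferentiableAt ℝ (fderiv ℝ f) x :=
    (hC.fderiv_right (m := 1) (by norm_num)).differentiableAt one_ne_zero
  have key : ∀ a b : Fin n, pd a (pd b f) x = fderiv ℝ (fderiv ℝ f) x (ee n a) (ee n b) := by
    intro a b
    have : pd a (pd b f) x = fderiv ℝ (fun z => fderiv ℝ f z (ee n b)) x (ee n a) := rfl
    rw [this, fderiv_clm_apply hd (differentiableAt_const _)]
    simp
  rw [key i j, key j i, hsym]

lemma PP_neg_two : PP (-2) x = ((qq x)⁻¹)^2 := by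
  unfold PP
  rw [show (-2:ℝ) = ((-2:ℤ):ℝ) by norm_num, Real.rpow_intCast]
  simp [zpow_neg, inv_pow]

lemma PP_neg_three : PP (-3) x = ((qq x)⁻¹)^3 := by
  unfold PP
  rw [show (-3:ℝ) = ((-3:ℤ):ℝ) by norm_num, Real.rpow_intCast]
  simp [zpow_neg, inv_pow]

lemma AA_sq (hx : x ≠ 0) (j k : Fin n) :
    ∑ i, AA i j x * AA i k x = if j = k then ((qq x)⁻¹)^2 else 0 := by
  have hq := qq_ne hx
  have expand : ∀ i : Fin n, AA i j x * AA i k x =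
      ((if i = j then (if i = k then ((qq x)⁻¹)^2 else 0) else 0)
      - (if i = j then 2*((qq x)⁻¹)^3 * x i * x k else 0)
      - (if i = k then 2*((qq x)⁻¹)^3 * x i * x j else 0))
      + (4*((qq x)⁻¹)^4 * x j * x k) * x i^2 := by
    intro i
    unfold AA
    rw [PP_neg_one, PP_neg_two]
    by_cases h1 : i = j
    · subst h1
      by_cases h2 : i = k
      · subst h2; simp; ring
      · simp [h2]; ring
    · by_cases h2 : i = k
      · subst h2
        have h3 : ¬ j = i := fun h => h1 h.symm
        simp [h1, h3]
        ring
      · simp [h1, h2]; ring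
  rw [Finset.sum_congr rfl (fun i _ => expand i)]
  rw [Finset.sum_add_distrib, Finset.sum_sub_distrib, Finset.sum_sub_distrib,
    ← Finset.mul_sum, ← qq_sum]
  simp only [Finset.sum_ite_eq', Finset.mem_univ, if_true]
  by_cases h : j = k <;> simp [h] <;> field_simp <;> ring

lemma sum_x_AA (hx : x ≠ 0) (j : Fin n) :
    ∑ i, x i * AA i j x = -((qq x)⁻¹ * x j) := by
  have hq := qq_ne hx
  have expand : ∀ i : Fin n, x i * AA i j x =
      (if i = j then (qq x)⁻¹ * x i else 0) - (2*((qq x)⁻¹)^2 * x j) * x i^2 := by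
    intro i
    unfold AA
    rw [PP_neg_one, PP_neg_two]
    by_cases h1 : i = j <;> simp [h1] <;> ring
  rw [Finset.sum_congr rfl (fun i _ => expand i), Finset.sum_sub_distrib,
    ← Finset.mul_sum, ← qq_sum]
  simp only [Finset.sum_ite_eq', Finset.mem_univ, if_true]
  field_simp
  ring

lemma pd_cube (hx : x ≠ 0) (i j k : Fin n) :
    pd i (fun z => 2 * PP (-2) z * z j * z k) x
      = -8*((qq x)⁻¹)^3 * x i * x j * x k
        + 2*((qq x)⁻¹)^2 * ((if i = j then 1 else 0) * x k + x j * (if i = k then 1 else 0)) := by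
  have d1 : DifferentiableAt ℝ (fun z : Er n => 2 * PP (-2) z) x := (diff_PP hx).const_mul 2
  have d2 : DifferentiableAt ℝ (fun z : Er n => 2 * PP (-2) z * z j) x := d1.mul diff_coord
  rw [pd_mul d2 diff_coord, pd_mul d1 diff_coord, pd_const_mul 2 (diff_PP hx), pd_PP hx,
    pd_coord, pd_coord]
  rw [PP_neg_two, show (-2:ℝ)-1 = -3 by norm_num, PP_neg_three]
  ring

lemma pd_AA (hx : x ≠ 0) (i j : Fin n) :
    pd i (AA i j) x = (if i = j then -4*((qq x)⁻¹)^2 * x i else 0)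
      + 8*((qq x)⁻¹)^3 * x i^2 * x j - 2*((qq x)⁻¹)^2 * x j := by
  have hAA : AA i j = fun z => (if i = j then PP (-1) z else 0) - 2 * PP (-2) z * z i * z j := by
    funext z; unfold AA; ring
  have d1 : DifferentiableAt ℝ (fun z : Er n => if i = j then PP (-1) z else 0) x := by
    by_cases h : i = j <;> simp [h]
    exact diff_PP hx
  have d2 : DifferentiableAt ℝ (fun z : Er n => 2 * PP (-2) z * z i * z j) x :=
    (((diff_PP hx).const_mul 2).mul diff_coord).mul diff_coord
  have h1 : pd i (fun z : Er n => if i = j then PP (-1) z else 0) x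
      = if i = j then -2*((qq x)⁻¹)^2 * x i else 0 := by
    by_cases h : i = j
    · subst h
      simp only [eq_self_iff_true, if_true]
      rw [pd_PP hx, show (-1:ℝ)-1 = -2 by norm_num, PP_neg_two]
      ring
    · simp only [h, if_false]
      unfold pd
      rw [fderiv_fun_const]
      simp
  rw [hAA, pd_sub d1 d2, pd_cube hx i i j, h1]
  by_cases h : i = j
  · subst h; simp; ring
  · simp [h]; ring

lemma sum_pd_AA (hx : x ≠ 0) (j : Fin n) :
    ∑ i, pd i (AA i j) x = (4 - 2*(n:ℝ)) * ((qq x)⁻¹)^2 * x j := by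
  have hq := qq_ne hx
  rw [Finset.sum_congr rfl (fun i _ => pd_AA hx i j)]
  rw [Finset.sum_sub_distrib, Finset.sum_add_distrib]
  simp only [Finset.sum_ite_eq', Finset.mem_univ, if_true]
  rw [show ∀ s : Finset (Fin n), ∑ i ∈ s, 8*((qq x)⁻¹)^3 * x i^2 * x j
      = ∑ i ∈ s, (8*((qq x)⁻¹)^3 * x j) * x i^2 from fun s => Finset.sum_congr rfl (fun i _ => by ring)]
  rw [← Finset.mul_sum, ← qq_sum]
  rw [Finset.sum_const, Finset.card_univ, Fintype.card_fin]
  field_simp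
  have h1 : qq x ^ 2 * (qq x)⁻¹ ^ 2 = 1 := by field_simp
  linear_combination (-2 * x j * (n:ℝ)) * h1

def Ee (f : Er n → ℝ) (x : Er n) : ℝ := ∑ j, x j * pd j f x

lemma pd_congrU (h : ∀ z : Er n, z ≠ 0 → f z = g z) (hx : x ≠ 0) : pd i f x = pd i g x :=
  pd_congr_nhds (by filter_upwards [mem_nhdsU hx] with z hz using h z hz)

lemma lap_congrU (h : ∀ z : Er n, z ≠ 0 → f z = g z) (hx : x ≠ 0) : lap n f x = lap n g x := by
  rw [lap_pd, lap_pd]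
  exact Finset.sum_congr rfl fun i _ => pd_congrU (fun z hz => pd_congrU h hz) hx

lemma lap_of_pd_eq {F : Fin n → Er n → ℝ} (hx : x ≠ 0)
    (hF : ∀ (i : Fin n) (z : Er n), z ≠ 0 → pd i f z = F i z) :
    lap n f x = ∑ i, pd i (F i) x := by
  rw [lap_pd]
  exact Finset.sum_congr rfl fun i _ => pd_congrU (hF i) hx

lemma sum_x_pd (hx : x ≠ 0) (ψ : Er n → ℝ) :
    ∑ j, x j * pd j ψ (inv0 x) = qq x * Ee ψ (inv0 x) := by
  unfold Ee
  rw [Finset.mul_sum]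
  refine Finset.sum_congr rfl fun j _ => ?_
  rw [inv0_coord, PP_neg_one]
  have hq := qq_ne hx
  field_simp

lemma lap_comp_inv0 {ψ : Er n → ℝ} (hψ : ContDiffOn ℝ 2 ψ {(0:Er n)}ᶜ) (hx : x ≠ 0) :
    lap n (fun z => ψ (inv0 z)) x
      = ((qq x)⁻¹)^2 * lap n ψ (inv0 x) + (4 - 2*(n:ℝ)) * (qq x)⁻¹ * Ee ψ (inv0 x) := by
  have hq := qq_ne hx
  have hψ1 : ContDiffOn ℝ ((1:ℕ)+1) ψ {(0:Er n)}ᶜ := by exact_mod_cast hψ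
  have hdψ : ∀ z : Er n, z ≠ 0 → DifferentiableAt ℝ ψ z := fun z hz => diffAt (k := 1) hψ1 hz
  have hdpd : ∀ (j : Fin n) (z : Er n), z ≠ 0 → DifferentiableAt ℝ (pd j ψ) z := by
    intro j z hz
    have h0 : ContDiffOn ℝ (1:ℕ) (pd j ψ) {(0:Er n)}ᶜ := cdOn_pd (k := 1) hψ1
    exact diffAt (k := 0) (by exact_mod_cast h0) hz
  have hdcomp : ∀ j : Fin n, DifferentiableAt ℝ (fun z => pd j ψ (inv0 z)) x :=
    fun j => (hdpd j _ (inv0_ne hx)).comp x (diff_inv0 hx)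
  have step1 : ∀ (i : Fin n) (z : Er n), z ≠ 0 → pd i (fun w => ψ (inv0 w)) z
      = ∑ j, pd j ψ (inv0 z) * AA i j z :=
    fun i z hz => pd_comp_inv0 (hdψ _ (inv0_ne hz)) hz
  rw [lap_of_pd_eq hx step1]
  have step2 : ∀ i : Fin n, pd i (fun z => ∑ j, pd j ψ (inv0 z) * AA i j z) x
      = ∑ j, (pd j ψ (inv0 x) * pd i (AA i j) x
              + AA i j x * ∑ k, pd k (pd j ψ) (inv0 x) * AA i k x) := by
    intro i
    rw [pd_sum _ (fun j => (hdcomp j).fun_mul (diff_AA hx))]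
    refine Finset.sum_congr rfl fun j _ => ?_
    rw [pd_mul (hdcomp j) (diff_AA hx)]
    rw [pd_comp_inv0 (ψ := pd j ψ) (hdpd j _ (inv0_ne hx)) hx]
  rw [Finset.sum_congr rfl (fun i _ => step2 i)]
  rw [Finset.sum_comm]
  rw [Finset.sum_congr rfl (fun j (_ : j ∈ Finset.univ) => Finset.sum_add_distrib
      (s := Finset.univ) (f := fun i => pd j ψ (inv0 x) * pd i (AA i j) x)
      (g := fun i => AA i j x * ∑ k, pd k (pd j ψ) (inv0 x) * AA i k x))]
  rw [Finset.sum_add_distrib]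
  -- first piece
  have T1 : ∑ j, ∑ i, pd j ψ (inv0 x) * pd i (AA i j) x
      = (4 - 2*(n:ℝ)) * (qq x)⁻¹ * Ee ψ (inv0 x) := by
    have h1 : ∀ j : Fin n, ∑ i, pd j ψ (inv0 x) * pd i (AA i j) x
        = pd j ψ (inv0 x) * ((4 - 2*(n:ℝ)) * ((qq x)⁻¹)^2 * x j) := by
      intro j
      rw [← Finset.mul_sum, sum_pd_AA hx j]
    rw [Finset.sum_congr rfl (fun j _ => h1 j)]
    have h2 : ∀ j : Fin n, pd j ψ (inv0 x) * ((4 - 2*(n:ℝ)) * ((qq x)⁻¹)^2 * x j)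
        = ((4 - 2*(n:ℝ)) * ((qq x)⁻¹)^2) * (x j * pd j ψ (inv0 x)) := fun j => by ring
    rw [Finset.sum_congr rfl (fun j _ => h2 j), ← Finset.mul_sum, sum_x_pd hx]
    field_simp
  -- second piece
  have T2 : ∑ j, ∑ i, AA i j x * ∑ k, pd k (pd j ψ) (inv0 x) * AA i k x
      = ((qq x)⁻¹)^2 * lap n ψ (inv0 x) := by
    have h1 : ∀ j i : Fin n, AA i j x * ∑ k, pd k (pd j ψ) (inv0 x) * AA i k x
        = ∑ k, pd k (pd j ψ) (inv0 x) * (AA i j x * AA i k x) := by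
      intro j i
      rw [Finset.mul_sum]
      exact Finset.sum_congr rfl fun k _ => by ring
    rw [Finset.sum_congr rfl (fun j (_ : j ∈ Finset.univ) =>
      Finset.sum_congr rfl (fun i (_ : i ∈ Finset.univ) => h1 j i))]
    have h2 : ∀ j : Fin n, ∑ i, ∑ k, pd k (pd j ψ) (inv0 x) * (AA i j x * AA i k x)
        = ∑ k, pd k (pd j ψ) (inv0 x) * ∑ i, AA i j x * AA i k x := by
      intro j
      rw [Finset.sum_comm]
      exact Finset.sum_congr rfl fun k _ => by rw [← Finset.mul_sum]
    rw [Finset.sum_congr rfl (fun j _ => h2 j)]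
    have h3 : ∀ j : Fin n, ∑ k, pd k (pd j ψ) (inv0 x) * ∑ i, AA i j x * AA i k x
        = pd j (pd j ψ) (inv0 x) * ((qq x)⁻¹)^2 := by
      intro j
      have h4 : ∀ k : Fin n, pd k (pd j ψ) (inv0 x) * ∑ i, AA i j x * AA i k x
          = if j = k then pd k (pd j ψ) (inv0 x) * ((qq x)⁻¹)^2 else 0 := by
        intro k
        rw [AA_sq hx j k]
        split <;> simp
      rw [Finset.sum_congr rfl (fun k _ => h4 k), Finset.sum_ite_eq, if_pos (Finset.mem_univ j)]
    rw [Finset.sum_congr rfl (fun j _ => h3 j), lap_pd, Finset.mul_sum]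
    exact Finset.sum_congr rfl fun j _ => by ring
  rw [T1, T2]
  ring

lemma Ee_comp_inv0 {ψ : Er n → ℝ} (hψd : DifferentiableAt ℝ ψ (inv0 x)) (hx : x ≠ 0) :
    Ee (fun z => ψ (inv0 z)) x = - Ee ψ (inv0 x) := by
  have hq := qq_ne hx
  show ∑ j, x j * pd j (fun z => ψ (inv0 z)) x = - Ee ψ (inv0 x)
  rw [Finset.sum_congr rfl (fun i (_ : i ∈ Finset.univ) =>
    by rw [pd_comp_inv0 hψd hx])]
  have h1 : ∀ i : Fin n, x i * ∑ j, pd j ψ (inv0 x) * AA i j x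
      = ∑ j, pd j ψ (inv0 x) * (x i * AA i j x) := by
    intro i
    rw [Finset.mul_sum]
    exact Finset.sum_congr rfl fun j _ => by ring
  rw [Finset.sum_congr rfl fun i _ => h1 i, Finset.sum_comm]
  have h2 : ∀ j : Fin n, ∑ i, pd j ψ (inv0 x) * (x i * AA i j x)
      = pd j ψ (inv0 x) * (-((qq x)⁻¹ * x j)) := by
    intro j
    rw [← Finset.mul_sum, sum_x_AA hx]
  rw [Finset.sum_congr rfl fun j _ => h2 j]
  have h3 : ∀ j : Fin n, pd j ψ (inv0 x) * (-((qq x)⁻¹ * x j))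
      = (-(qq x)⁻¹) * (x j * pd j ψ (inv0 x)) := fun j => by ring
  rw [Finset.sum_congr rfl fun j _ => h3 j, ← Finset.mul_sum, sum_x_pd hx]
  field_simp

lemma lap_PP_mul {f : Er n → ℝ} (hf : ContDiffOn ℝ 2 f {(0:Er n)}ᶜ) (hx : x ≠ 0) (b : ℝ) :
    lap n (fun z => PP b z * f z) x
      = PP b x * lap n f x + 4*b*PP (b-1) x * Ee f x
        + (2*b*(2*b+(n:ℝ)-2)) * PP (b-1) x * f x := by
  have hq := qq_ne hx
  have hf1 : ContDiffOn ℝ ((1:ℕ)+1) f {(0:Er n)}ᶜ := by exact_mod_cast hf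
  have hdf : ∀ z : Er n, z ≠ 0 → DifferentiableAt ℝ f z := fun z hz => diffAt (k := 1) hf1 hz
  have hdpd : ∀ (j : Fin n) (z : Er n), z ≠ 0 → DifferentiableAt ℝ (pd j f) z := by
    intro j z hz
    have h0 : ContDiffOn ℝ (1:ℕ) (pd j f) {(0:Er n)}ᶜ := cdOn_pd (k := 1) hf1
    exact diffAt (k := 0) (by exact_mod_cast h0) hz
  have step1 : ∀ (i : Fin n) (z : Er n), z ≠ 0 → pd i (fun w => PP b w * f w) z
      = PP b z * pd i f z + f z * (2*b*PP (b-1) z * z i) := by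
    intro i z hz
    rw [pd_mul (diff_PP hz) (hdf z hz), pd_PP hz]
  rw [lap_of_pd_eq hx step1]
  have hd2 : ∀ i : Fin n, DifferentiableAt ℝ (fun z : Er n => 2*b*PP (b-1) z * z i) x :=
    fun i => ((diff_PP hx).const_mul (2*b)).mul diff_coord
  have step2 : ∀ i : Fin n,
      pd i (fun z => PP b z * pd i f z + f z * (2*b*PP (b-1) z * z i)) x
      = PP b x * pd i (pd i f) x + (4*b*PP (b-1) x) * (x i * pd i f x)
        + ((2*b*PP (b-1) x) * f x + (4*b*(b-1))*PP (b-2) x * f x * x i^2) := by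
    intro i
    rw [pd_add ((diff_PP hx).fun_mul (hdpd i x hx)) ((hdf x hx).fun_mul (hd2 i))]
    rw [pd_mul (diff_PP hx) (hdpd i x hx), pd_PP hx]
    rw [pd_mul (hdf x hx) (hd2 i)]
    have inner : pd i (fun z : Er n => 2*b*PP (b-1) z * z i) x
        = 2*b*PP (b-1) x + (4*b*(b-1))*PP (b-2) x * x i^2 := by
      rw [pd_mul ((diff_PP hx).const_mul (2*b)) diff_coord,
        pd_const_mul (2*b) (diff_PP hx), pd_PP hx, pd_coord, if_pos rfl]
      rw [show b - 1 - 1 = b - 2 by ring]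
      ring
    rw [inner]
    ring
  rw [Finset.sum_congr rfl (fun i _ => step2 i)]
  rw [Finset.sum_add_distrib, Finset.sum_add_distrib, Finset.sum_add_distrib]
  rw [← Finset.mul_sum, ← Finset.mul_sum, ← lap_pd]
  have hEe : ∑ i, x i * pd i f x = Ee f x := rfl
  rw [hEe]
  rw [Finset.sum_const, Finset.card_univ, Fintype.card_fin]
  have h4 : ∑ i, (4*b*(b-1))*PP (b-2) x * f x * x i^2
      = (4*b*(b-1)) * PP (b-2) x * f x * qq x := by
    rw [qq_sum, Finset.mul_sum]
  rw [h4]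
  have hPq : PP (b-2) x * qq x = PP (b-1) x := by
    have h5 := PP_qq (b := b - 2) hx
    rw [show b - 2 + 1 = b - 1 by ring] at h5
    exact h5
  have h6 : (4*b*(b-1)) * PP (b-2) x * f x * qq x = (4*b*(b-1)) * PP (b-1) x * f x := by
    rw [← hPq]; ring
  rw [h6, nsmul_eq_mul]
  push_cast
  ring

lemma contDiffOn_inv0 {k : WithTop ℕ∞} : ContDiffOn ℝ k (inv0 (n := n)) {(0:Er n)}ᶜ :=
  fun z hz => (contDiffAt_inv0 (by simpa using hz)).contDiffWithinAt

lemma cdOn_comp_inv0 {k : WithTop ℕ∞} {ψ : Er n → ℝ} (hψ : ContDiffOn ℝ k ψ {(0:Er n)}ᶜ) :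
    ContDiffOn ℝ k (fun z => ψ (inv0 z)) {(0:Er n)}ᶜ :=
  ContDiffOn.comp hψ contDiffOn_inv0 (fun z hz => by simpa using inv0_ne (by simpa using hz))

lemma PP_inv (hx : x ≠ 0) (b : ℝ) : PP b x * (qq x)⁻¹ = PP (b-1) x := by
  have h := PP_qq (b := b - 1) hx
  rw [show b - 1 + 1 = b by ring] at h
  rw [← h, mul_assoc, mul_inv_cancel₀ (qq_ne hx), mul_one]

lemma PP_inv2 (hx : x ≠ 0) (b : ℝ) : PP b x * ((qq x)⁻¹)^2 = PP (b-2) x := by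
  have h1 : PP b x * (qq x)⁻¹ = PP (b-1) x := PP_inv hx b
  have h2 : PP (b-1) x * (qq x)⁻¹ = PP (b-1-1) x := PP_inv hx (b-1)
  rw [show b - 2 = b - 1 - 1 by ring, ← h2, ← h1]
  ring

lemma kelvin {ψ : Er n → ℝ} (hψ : ContDiffOn ℝ 2 ψ {(0:Er n)}ᶜ) (hx : x ≠ 0) :
    lap n (fun z => PP ((2-(n:ℝ))/2) z * ψ (inv0 z)) x
      = PP ((2-(n:ℝ))/2 - 2) x * lap n ψ (inv0 x) := by
  have hq := qq_ne hx
  set b := (2-(n:ℝ))/2 with hbdef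
  have hcomp : ContDiffOn ℝ 2 (fun z => ψ (inv0 z)) {(0:Er n)}ᶜ := cdOn_comp_inv0 hψ
  rw [lap_PP_mul hcomp hx b]
  rw [lap_comp_inv0 hψ hx]
  have hψ1 : ContDiffOn ℝ ((1:ℕ)+1) ψ {(0:Er n)}ᶜ := by exact_mod_cast hψ
  rw [Ee_comp_inv0 (diffAt (k := 1) hψ1 (inv0_ne hx)) hx]
  have h1 : PP b x * ((qq x)⁻¹)^2 = PP (b-2) x := PP_inv2 hx b
  have h2 : PP b x * (qq x)⁻¹ = PP (b-1) x := PP_inv hx b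
  have hb : 2*b+(n:ℝ)-2 = 0 := by rw [hbdef]; ring
  have hb2 : (4:ℝ) - 2*(n:ℝ) - 4*b = 0 := by rw [hbdef]; ring
  linear_combination (lap n ψ (inv0 x)) * h1 + ((4 - 2*(n:ℝ)) * Ee ψ (inv0 x)) * h2
    + (PP (b-1) x * Ee ψ (inv0 x)) * hb2 + (2*b*PP (b-1) x * ψ (inv0 x)) * hb

lemma lap_Ee {f : Er n → ℝ} (hf : ContDiffOn ℝ 3 f {(0:Er n)}ᶜ) (hx : x ≠ 0) :
    lap n (Ee f) x = Ee (lap n f) x + 2 * lap n f x := by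
  have hf3 : ContDiffOn ℝ ((2:ℕ)+1) f {(0:Er n)}ᶜ := by exact_mod_cast hf
  have hpdC2 : ∀ j : Fin n, ContDiffOn ℝ 2 (pd j f) {(0:Er n)}ᶜ := fun j => by
    have h := cdOn_pd (k := 2) (i := j) hf3
    exact_mod_cast h
  have hfC2 : ContDiffOn ℝ 2 f {(0:Er n)}ᶜ := hf.of_le (by norm_num)
  have hdpd : ∀ (j : Fin n) (z : Er n), z ≠ 0 → DifferentiableAt ℝ (pd j f) z := fun j z hz => by
    have h1 : ContDiffOn ℝ ((1:ℕ)+1) (pd j f) {(0:Er n)}ᶜ := by exact_mod_cast hpdC2 j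
    exact diffAt (k := 1) h1 hz
  have hdpd2 : ∀ (i j : Fin n) (z : Er n), z ≠ 0 → DifferentiableAt ℝ (pd i (pd j f)) z := by
    intro i j z hz
    have h1 : ContDiffOn ℝ ((1:ℕ)+1) (pd j f) {(0:Er n)}ᶜ := by exact_mod_cast hpdC2 j
    have h2 : ContDiffOn ℝ ((0:ℕ)+1) (pd i (pd j f)) {(0:Er n)}ᶜ := by
      have h3 := cdOn_pd (k := 1) (i := i) h1
      exact_mod_cast h3
    exact diffAt (k := 0) h2 hz
  have step1 : ∀ (i : Fin n) (z : Er n), z ≠ 0 → pd i (Ee f) z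
      = pd i f z + ∑ j, z j * pd i (pd j f) z := by
    intro i z hz
    have hE : Ee f = fun w : Er n => ∑ j, w j * pd j f w := rfl
    rw [hE, pd_sum _ (fun j => diff_coord.fun_mul (hdpd j z hz))]
    rw [Finset.sum_congr rfl (fun j (_ : j ∈ Finset.univ) => pd_mul diff_coord (hdpd j z hz))]
    rw [Finset.sum_add_distrib]
    simp only [pd_coord, mul_ite, mul_one, mul_zero, Finset.sum_ite_eq, Finset.sum_ite_eq',
      Finset.mem_univ, if_true]
    ring
  rw [lap_of_pd_eq hx step1]
  have step2 : ∀ i : Fin n,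
      pd i (fun z => pd i f z + ∑ j, z j * pd i (pd j f) z) x
      = 2 * pd i (pd i f) x + ∑ j, x j * pd i (pd i (pd j f)) x := by
    intro i
    have hdsum : DifferentiableAt ℝ (fun z : Er n => ∑ j, z j * pd i (pd j f) z) x := by
      apply DifferentiableAt.fun_sum
      exact fun j _ => diff_coord.mul (hdpd2 i j x hx)
    rw [pd_add (hdpd i x hx) hdsum]
    rw [pd_sum _ (fun j => diff_coord.fun_mul (hdpd2 i j x hx))]
    rw [Finset.sum_congr rfl (fun j (_ : j ∈ Finset.univ) => pd_mul diff_coord (hdpd2 i j x hx))]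
    rw [Finset.sum_add_distrib]
    simp only [pd_coord, mul_ite, mul_one, mul_zero, Finset.sum_ite_eq, Finset.sum_ite_eq',
      Finset.mem_univ, if_true]
    ring
  rw [Finset.sum_congr rfl (fun i _ => step2 i)]
  rw [Finset.sum_add_distrib, ← Finset.mul_sum, ← lap_pd, Finset.sum_comm]
  have hsw : ∀ i j : Fin n, pd i (pd i (pd j f)) x = pd j (pd i (pd i f)) x := by
    intro i j
    have e1 : pd i (pd i (pd j f)) x = pd i (pd j (pd i f)) x :=
      pd_congrU (fun z hz => pd_symm hfC2 hz) hx
    have e2 : pd i (pd j (pd i f)) x = pd j (pd i (pd i f)) x := pd_symm (hpdC2 i) hx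
    rw [e1, e2]
  have step3 : ∀ j : Fin n, ∑ i, x j * pd i (pd i (pd j f)) x = x j * pd j (lap n f) x := by
    intro j
    rw [← Finset.mul_sum]
    congr 1
    have hlap : lap n f = fun z => ∑ i, pd i (pd i f) z := rfl
    rw [hlap, pd_sum _ (fun i => hdpd2 i i x hx)]
    exact Finset.sum_congr rfl fun i _ => hsw i j
  rw [Finset.sum_congr rfl (fun j _ => step3 j)]
  have hEe : ∑ j, x j * pd j (lap n f) x = Ee (lap n f) x := rfl
  rw [hEe]
  ring

lemma cdOn_PP {k : WithTop ℕ∞} (b : ℝ) : ContDiffOn ℝ k (PP (n := n) b) {(0:Er n)}ᶜ :=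
  fun z hz => (contDiffAt_PP (by simpa using hz)).contDiffWithinAt

lemma cdOn_coord {k : WithTop ℕ∞} (j : Fin n) : ContDiffOn ℝ k (fun z : Er n => z j) {(0:Er n)}ᶜ :=
  ((EuclideanSpace.proj (𝕜 := ℝ) j).contDiff).contDiffOn

lemma cdOn_Ee {k : ℕ} {f : Er n → ℝ} (hf : ContDiffOn ℝ (k+1) f {(0:Er n)}ᶜ) :
    ContDiffOn ℝ k (Ee f) {(0:Er n)}ᶜ := by
  have h : ∀ j : Fin n, ContDiffOn ℝ k (fun z => z j * pd j f z) {(0:Er n)}ᶜ :=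
    fun j => (cdOn_coord j).mul (cdOn_pd hf)
  exact ContDiffOn.sum (fun j _ => h j)

lemma diffAt_of_cd2 {f : Er n → ℝ} (hf : ContDiffOn ℝ 2 f {(0:Er n)}ᶜ) (hz : x ≠ 0) :
    DifferentiableAt ℝ f x := by
  have h : ContDiffOn ℝ ((1:ℕ)+1) f {(0:Er n)}ᶜ := by exact_mod_cast hf
  exact diffAt (k := 1) h hz

lemma diffAt_pd_of_cd2 {f : Er n → ℝ} (hf : ContDiffOn ℝ 2 f {(0:Er n)}ᶜ) (hz : x ≠ 0) :
    DifferentiableAt ℝ (pd i f) x := by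
  have h : ContDiffOn ℝ ((1:ℕ)+1) f {(0:Er n)}ᶜ := by exact_mod_cast hf
  have h0 : ContDiffOn ℝ (1:ℕ) (pd i f) {(0:Er n)}ᶜ := cdOn_pd (k := 1) h
  exact diffAt (k := 0) (by exact_mod_cast h0) hz

lemma lap_add' {f g : Er n → ℝ} (hf : ContDiffOn ℝ 2 f {(0:Er n)}ᶜ)
    (hg : ContDiffOn ℝ 2 g {(0:Er n)}ᶜ) (hx : x ≠ 0) :
    lap n (fun z => f z + g z) x = lap n f x + lap n g x := by
  have step1 : ∀ (i : Fin n) (z : Er n), z ≠ 0 → pd i (fun w => f w + g w) z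
      = pd i f z + pd i g z :=
    fun i z hz => pd_add (diffAt_of_cd2 hf hz) (diffAt_of_cd2 hg hz)
  rw [lap_of_pd_eq hx step1, lap_pd, lap_pd, ← Finset.sum_add_distrib]
  exact Finset.sum_congr rfl fun i _ =>
    pd_add (diffAt_pd_of_cd2 hf hx) (diffAt_pd_of_cd2 hg hx)

lemma lap_const_mul' {f : Er n → ℝ} (c : ℝ) (hf : ContDiffOn ℝ 2 f {(0:Er n)}ᶜ) (hx : x ≠ 0) :
    lap n (fun z => c * f z) x = c * lap n f x := by
  have step1 : ∀ (i : Fin n) (z : Er n), z ≠ 0 → pd i (fun w => c * f w) z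
      = c * pd i f z := fun i z hz => pd_const_mul c (diffAt_of_cd2 hf hz)
  rw [lap_of_pd_eq hx step1, lap_pd, Finset.mul_sum]
  exact Finset.sum_congr rfl fun i _ => pd_const_mul c (diffAt_pd_of_cd2 hf hx)

lemma PP_two_inv0 (hx : x ≠ 0) : PP 2 (inv0 x) = PP (-2) x := by
  rw [PP_neg_two]
  unfold PP
  rw [qq_inv0 hx, show (2:ℝ) = ((2:ℕ):ℝ) by norm_num, Real.rpow_natCast]

lemma PP_neg_one_inv0 (hx : x ≠ 0) : PP (-1) (inv0 x) = qq x := by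
  rw [PP_neg_one, qq_inv0 hx, inv_inv]

lemma lap_hh {φ : Er n → ℝ} (hφ : ContDiffOn ℝ 4 φ {(0:Er n)}ᶜ) (hy : x ≠ 0) :
    lap n (fun w => PP 2 w * lap n (fun v => PP (-1) v * φ v) w) x
      = qq x * bilap n φ x := by
  have hφC2 : ContDiffOn ℝ 2 φ {(0:Er n)}ᶜ := hφ.of_le (by norm_num)
  have hφC3 : ContDiffOn ℝ 3 φ {(0:Er n)}ᶜ := hφ.of_le (by norm_num)
  have hlapφC2 : ContDiffOn ℝ 2 (lap n φ) {(0:Er n)}ᶜ := by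
    have h4 : ContDiffOn ℝ ((2:ℕ)+2) φ {(0:Er n)}ᶜ := by exact_mod_cast hφ
    have := cdOn_lap (k := 2) h4
    exact_mod_cast this
  have hEeφC2 : ContDiffOn ℝ 2 (Ee φ) {(0:Er n)}ᶜ := by
    have h3 : ContDiffOn ℝ ((2:ℕ)+1) φ {(0:Er n)}ᶜ := by exact_mod_cast hφC3
    have := cdOn_Ee (k := 2) h3
    exact_mod_cast this
  have Gstep : ∀ w : Er n, w ≠ 0 → PP 2 w * lap n (fun v => PP (-1) v * φ v) w
      = PP 1 w * lap n φ w + ((-4) * Ee φ w + (-2*((n:ℝ)-4)) * φ w) := by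
    intro w hw
    rw [lap_PP_mul hφC2 hw (-1)]
    have m1 : PP 2 w * PP (-1) w = PP 1 w := by
      rw [PP_mul hw]; norm_num
    have m2 : PP 2 w * PP ((-1:ℝ)-1) w = 1 := by
      rw [PP_mul hw]; norm_num [PP_zero]
    linear_combination (lap n φ w) * m1
      + ((4*(-1:ℝ))*Ee φ w + (2*(-1)*(2*(-1)+(n:ℝ)-2))*φ w) * m2
  have hG1 : ContDiffOn ℝ 2 (fun w : Er n => PP 1 w * lap n φ w) {(0:Er n)}ᶜ :=
    (cdOn_PP 1).mul hlapφC2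
  have hG2 : ContDiffOn ℝ 2 (fun w : Er n => (-4) * Ee φ w + (-2*((n:ℝ)-4)) * φ w)
      {(0:Er n)}ᶜ :=
    (contDiffOn_const.mul hEeφC2).add (contDiffOn_const.mul hφC2)
  rw [lap_congrU (g := fun w => PP 1 w * lap n φ w
      + ((-4) * Ee φ w + (-2*((n:ℝ)-4)) * φ w)) Gstep hy]
  rw [lap_add' hG1 hG2 hy]
  rw [lap_add' (contDiffOn_const.mul hEeφC2) (contDiffOn_const.mul hφC2) hy]
  rw [lap_const_mul' (-4) hEeφC2 hy, lap_const_mul' (-2*((n:ℝ)-4)) hφC2 hy]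
  rw [lap_PP_mul hlapφC2 hy 1]
  rw [lap_Ee hφC3 hy]
  have hb : bilap n φ x = lap n (lap n φ) x := rfl
  rw [hb, PP_one]
  norm_num [PP_zero]
  ring

lemma hnorm (z : Er n) (c : ℝ) : PP c z = ‖z‖ ^ (2*c) := by
  unfold PP qq
  rw [← Real.rpow_natCast ‖z‖ 2, ← Real.rpow_mul (norm_nonneg z)]
  norm_num

lemma inv0_def (z : Er n) : inv0 z = (‖z‖^2)⁻¹ • z := rfl


theorem stmt_17 (n : ℕ) (hn : 5 ≤ n)
    (φ : EuclideanSpace ℝ (Fin n) → ℝ)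
    (hφ : ContDiffOn ℝ 4 φ {(0 : EuclideanSpace ℝ (Fin n))}ᶜ)
    (φs : EuclideanSpace ℝ (Fin n) → ℝ)
    (hφs : ∀ x : EuclideanSpace ℝ (Fin n),
      φs x = ‖x‖ ^ (-((n : ℝ) - 4)) * φ ((‖x‖ ^ 2)⁻¹ • x)) :
    ∀ x : EuclideanSpace ℝ (Fin n), x ≠ 0 →
      bilap n φs x = ‖x‖ ^ (-(n : ℝ) - 4) * bilap n φ ((‖x‖ ^ 2)⁻¹ • x) := by
  intro x hx
  have hq := qq_ne hx
  have hψC4 : ContDiffOn ℝ 4 (fun v : Er n => PP (-1) v * φ v) {(0:Er n)}ᶜ :=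
    (cdOn_PP (-1)).mul hφ
  have hψC2 : ContDiffOn ℝ 2 (fun v : Er n => PP (-1) v * φ v) {(0:Er n)}ᶜ :=
    hψC4.of_le (by norm_num)
  have hlapψC2 : ContDiffOn ℝ 2 (lap n (fun v : Er n => PP (-1) v * φ v)) {(0:Er n)}ᶜ := by
    have h4 : ContDiffOn ℝ ((2:ℕ)+2) (fun v : Er n => PP (-1) v * φ v) {(0:Er n)}ᶜ := by
      exact_mod_cast hψC4
    have := cdOn_lap (k := 2) h4
    exact_mod_cast this
  have hhC2 : ContDiffOn ℝ 2
      (fun w : Er n => PP 2 w * lap n (fun v : Er n => PP (-1) v * φ v) w) {(0:Er n)}ᶜ :=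
    (cdOn_PP 2).mul hlapψC2
  have step_φs : ∀ z : Er n, z ≠ 0 →
      φs z = PP ((2-(n:ℝ))/2) z * ((fun v : Er n => PP (-1) v * φ v) (inv0 z)) := by
    intro z hz
    rw [hφs z, ← inv0_def]
    show ‖z‖ ^ (-((n : ℝ) - 4)) * φ (inv0 z) = PP ((2-(n:ℝ))/2) z * (PP (-1) (inv0 z) * φ (inv0 z))
    rw [PP_neg_one_inv0 hz, ← mul_assoc]
    have h2 : PP ((2-(n:ℝ))/2) z * qq z = PP ((2-(n:ℝ))/2 + 1) z := PP_qq hz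
    rw [h2, hnorm]
    congr 1
    ring
  have step_lapφs : ∀ z : Er n, z ≠ 0 →
      lap n φs z = PP ((2-(n:ℝ))/2) z *
        ((fun w : Er n => PP 2 w * lap n (fun v : Er n => PP (-1) v * φ v) w) (inv0 z)) := by
    intro z hz
    have e1 := lap_congrU (g := fun w : Er n =>
      PP ((2-(n:ℝ))/2) w * ((fun v : Er n => PP (-1) v * φ v) (inv0 w))) step_φs hz
    rw [e1, kelvin hψC2 hz]
    show PP ((2-(n:ℝ))/2 - 2) z * lap n (fun v : Er n => PP (-1) v * φ v) (inv0 z)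
      = PP ((2-(n:ℝ))/2) z * (PP 2 (inv0 z) * lap n (fun v : Er n => PP (-1) v * φ v) (inv0 z))
    rw [PP_two_inv0 hz]
    have m : PP ((2-(n:ℝ))/2) z * PP (-2) z = PP ((2-(n:ℝ))/2 + -2) z := PP_mul hz _ _
    rw [show (2-(n:ℝ))/2 - 2 = (2-(n:ℝ))/2 + -2 by ring]
    linear_combination (lap n (fun v : Er n => PP (-1) v * φ v) (inv0 z)) * m.symm
  have e2 : bilap n φs x = lap n (lap n φs) x := rfl
  rw [e2, lap_congrU step_lapφs hx, kelvin hhC2 hx, lap_hh hφ (inv0_ne hx), qq_inv0 hx]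
  rw [← inv0_def x]
  have m2 : PP ((2-(n:ℝ))/2 - 2) x * (qq x)⁻¹ = PP ((2-(n:ℝ))/2 - 2 - 1) x := PP_inv hx _
  rw [← mul_assoc, m2, hnorm]
  congr 1
  ring
end
end
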